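/- arXiv:1102.3502 — 7 statements merged into one kernel-verified Lean document; each statement's English description precedes it below -/
import Mathlib

section
/- If g₁,…,g_m : [0,∞) → ℝ are nonnegative square-integrable functions, then the time-ordered integral Υ_T[g₁,…,g_m] := ∫₀ᵀ g₁(t₁) ∫₀^{t₁} g₂(t₂) ⋯ ∫₀^{t_{m-1}} g_m(t_m) dt_m⋯dt₁ satisfies Υ_T[g₁,…,g_m] ≤ T^{m/2} ‖g₁‖_{L²} ⋯ ‖g_m‖_{L²}. -/
open MeasureTheory intervalIntegral

/-- The time-ordered iterated integral
`Υ_T[g₁,…,g_m] = ∫₀ᵀ g₁(t₁) ∫₀^{t₁} g₂(t₂) ⋯ ∫₀^{t_{m-1}} g_m(t_m) dt_m⋯dt₁`. -/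
noncomputable def Ups : ℝ → List (ℝ → ℝ) → ℝ
  | _, [] => 1
  | T, g :: gs => ∫ t in (0:ℝ)..T, g t * Ups t gs

/-- The L² norm of a real function on `[0,∞)`. -/
noncomputable def L2NormIoi (g : ℝ → ℝ) : ℝ :=
  Real.sqrt (∫ t in Set.Ioi (0:ℝ), (g t) ^ 2)

lemma Ups_nonneg (gs : List (ℝ → ℝ)) (hnonneg : ∀ g ∈ gs, ∀ t : ℝ, 0 ≤ g t) :
    ∀ t : ℝ, 0 ≤ t → 0 ≤ Ups t gs := by
  induction gs with
  | nil => intro t _; simp [Ups]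
  | cons g l ih =>
    intro t ht
    simp only [Ups]
    refine intervalIntegral.integral_nonneg ht fun s hs => ?_
    exact mul_nonneg (hnonneg g (by simp) s)
      (ih (fun g' hg' => hnonneg g' (by simp [hg'])) s hs.1)

lemma L2_prod_nonneg (gs : List (ℝ → ℝ)) : 0 ≤ (gs.map L2NormIoi).prod := by
  apply List.prod_nonneg
  intro x hx
  simp only [List.mem_map] at hx
  obtain ⟨g, _, rfl⟩ := hx
  exact Real.sqrt_nonneg _

-- Cauchy–Schwarz: ∫ g on Ioc 0 T ≤ √T * √(∫ g² on Ioc 0 T)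
lemma cs_bound {T : ℝ} (hT : 0 < T) {g : ℝ → ℝ} (hg : Measurable g)
    (h0 : ∀ t, 0 ≤ g t)
    (h2 : IntegrableOn (fun t => (g t) ^ 2) (Set.Ioc (0:ℝ) T)) :
    ∫ t in Set.Ioc (0:ℝ) T, g t ≤
      Real.sqrt T * Real.sqrt (∫ t in Set.Ioc (0:ℝ) T, (g t) ^ 2) := by
  have hpq : Real.HolderConjugate 2 2 := by constructor <;> norm_num
  have hmemg : MemLp g 2 (volume.restrict (Set.Ioc (0:ℝ) T)) :=
    (memLp_two_iff_integrable_sq (hg.aestronglyMeasurable)).2 h2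
  have hmem1 : MemLp (fun _ : ℝ => (1:ℝ)) 2 (volume.restrict (Set.Ioc (0:ℝ) T)) :=
    memLp_const 1
  have := MeasureTheory.integral_mul_le_Lp_mul_Lq_of_nonneg hpq
    (f := fun _ => (1:ℝ)) (g := g) (μ := volume.restrict (Set.Ioc (0:ℝ) T))
    (Filter.Eventually.of_forall fun _ => zero_le_one)
    (Filter.Eventually.of_forall fun t => h0 t)
    (by simpa using hmem1) (by simpa using hmemg)
  simp only [one_mul, Real.one_rpow] at this
  calc ∫ t in Set.Ioc (0:ℝ) T, g t
      ≤ (∫ _ in Set.Ioc (0:ℝ) T, (1:ℝ)) ^ ((1:ℝ)/2) *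
        (∫ t in Set.Ioc (0:ℝ) T, (g t) ^ (2:ℝ)) ^ ((1:ℝ)/2) := this
    _ = Real.sqrt T * Real.sqrt (∫ t in Set.Ioc (0:ℝ) T, (g t) ^ 2) := by
        have h1 : (∫ _ in Set.Ioc (0:ℝ) T, (1:ℝ)) = T := by
          simp [Real.volume_Ioc, hT.le]
        have h2' : (∫ t in Set.Ioc (0:ℝ) T, (g t) ^ (2:ℝ)) =
            ∫ t in Set.Ioc (0:ℝ) T, (g t) ^ 2 := by
          refine setIntegral_congr_fun measurableSet_Ioc fun t _ => ?_
          rw [← Real.rpow_natCast (g t) 2]; norm_num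
        rw [h1, h2', Real.sqrt_eq_rpow, Real.sqrt_eq_rpow]

theorem stmt2 (T : ℝ) (hT : 0 < T) (gs : List (ℝ → ℝ))
    (hnonneg : ∀ g ∈ gs, ∀ t : ℝ, 0 ≤ g t)
    (hL2 : ∀ g ∈ gs, IntegrableOn (fun t => (g t) ^ 2) (Set.Ioi (0:ℝ)))
    (hmeas : ∀ g ∈ gs, Measurable g) :
    Ups T gs ≤ T ^ ((gs.length : ℝ) / 2) * (gs.map L2NormIoi).prod := by
  induction gs generalizing T with
  | nil => simp [Ups]
  | cons g l ih =>
    have hg0 : ∀ t, 0 ≤ g t := hnonneg g (by simp)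
    have hgmeas : Measurable g := hmeas g (by simp)
    have hgL2 : IntegrableOn (fun t => (g t) ^ 2) (Set.Ioi (0:ℝ)) := hL2 g (by simp)
    have hl0 : ∀ g' ∈ l, ∀ t : ℝ, 0 ≤ g' t := fun g' hg' => hnonneg g' (by simp [hg'])
    have hlL2 : ∀ g' ∈ l, IntegrableOn (fun t => (g' t) ^ 2) (Set.Ioi (0:ℝ)) :=
      fun g' hg' => hL2 g' (by simp [hg'])
    have hlmeas : ∀ g' ∈ l, Measurable g' := fun g' hg' => hmeas g' (by simp [hg'])
    set C : ℝ := T ^ ((l.length : ℝ) / 2) * (l.map L2NormIoi).prod with hCdef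
    have hC0 : 0 ≤ C := mul_nonneg (Real.rpow_nonneg hT.le _) (L2_prod_nonneg l)
    -- uniform bound on [0, T]
    have hb : ∀ t ∈ Set.Icc (0:ℝ) T, Ups t l ≤ C := by
      intro t ht
      rcases eq_or_lt_of_le ht.1 with h | h
      · cases l with
        | nil => simp [Ups, hCdef, Real.rpow_zero]
        | cons g' l' =>
          rw [← h]
          simp only [Ups, intervalIntegral.integral_same]
          exact hC0
      · calc Ups t l ≤ t ^ ((l.length : ℝ) / 2) * (l.map L2NormIoi).prod :=
              ih t h hl0 hlL2 hlmeas
          _ ≤ C := by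
              refine mul_le_mul_of_nonneg_right ?_ (L2_prod_nonneg l)
              exact Real.rpow_le_rpow h.le ht.2 (by positivity)
    -- RHS nonneg
    have hrhs0 : 0 ≤ T ^ (((g :: l).length : ℝ) / 2) * ((g :: l).map L2NormIoi).prod :=
      mul_nonneg (Real.rpow_nonneg hT.le _) (L2_prod_nonneg _)
    by_cases hInt : IntervalIntegrable (fun t => g t * Ups t l) volume 0 T
    · -- integrability of g on Ioc 0 T
      have hg2Ioc : IntegrableOn (fun t => (g t) ^ 2) (Set.Ioc (0:ℝ) T) :=
        hgL2.mono_set Set.Ioc_subset_Ioi_self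
      have hgInt : IntegrableOn g (Set.Ioc (0:ℝ) T) := by
        have hconst : IntegrableOn (fun _ : ℝ => (1:ℝ)) (Set.Ioc (0:ℝ) T) :=
          integrableOn_const (by simp [Real.volume_Ioc])
        have hbnd : Integrable (fun t => (g t) ^ 2 + 1)
            (volume.restrict (Set.Ioc (0:ℝ) T)) := hg2Ioc.add hconst
        refine hbnd.mono' hgmeas.aestronglyMeasurable
          (Filter.Eventually.of_forall fun t => ?_)
        have := hg0 t
        simp only [Real.norm_eq_abs, abs_of_nonneg this]
        nlinarith [sq_nonneg (g t - 1)]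
      have hgII : IntervalIntegrable g volume 0 T := by
        rw [intervalIntegrable_iff_integrableOn_Ioc_of_le hT.le]; exact hgInt
      have step1 : Ups T (g :: l) ≤ ∫ t in (0:ℝ)..T, g t * C := by
        simp only [Ups]
        refine intervalIntegral.integral_mono_on hT.le hInt (hgII.mul_const C) fun t ht => ?_
        exact mul_le_mul_of_nonneg_left (hb t ht) (hg0 t)
      have step2 : (∫ t in (0:ℝ)..T, g t * C) = C * ∫ t in Set.Ioc (0:ℝ) T, g t := by
        rw [intervalIntegral.integral_mul_const, intervalIntegral.integral_of_le hT.le]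
        ring
      have step3 : (∫ t in Set.Ioc (0:ℝ) T, g t) ≤ Real.sqrt T * L2NormIoi g := by
        refine le_trans (cs_bound hT hgmeas hg0 hg2Ioc) ?_
        refine mul_le_mul_of_nonneg_left ?_ (Real.sqrt_nonneg T)
        apply Real.sqrt_le_sqrt
        refine setIntegral_mono_set hgL2 (Filter.Eventually.of_forall fun t => sq_nonneg _)
          (HasSubset.Subset.eventuallyLE Set.Ioc_subset_Ioi_self)
      calc Ups T (g :: l) ≤ C * ∫ t in Set.Ioc (0:ℝ) T, g t := by rw [← step2]; exact step1
        _ ≤ C * (Real.sqrt T * L2NormIoi g) := by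
            refine mul_le_mul_of_nonneg_left step3 hC0
        _ = T ^ (((g :: l).length : ℝ) / 2) * ((g :: l).map L2NormIoi).prod := by
            simp only [hCdef, List.length_cons, List.map_cons, List.prod_cons]
            rw [Real.sqrt_eq_rpow]
            rw [show (((l.length : ℕ) + 1 : ℕ) : ℝ) / 2 = (l.length : ℝ) / 2 + 1 / 2 by
              push_cast; ring]
            rw [Real.rpow_add hT]
            ring
    · simp only [Ups]
      rw [intervalIntegral.integral_undef hInt]
      exact hrhs0
end

section
/- Let f, g₁,…,g_m : [0,∞) → ℝ be nonnegative square-integrable functions and β₀,…,β_m ∈ ℕ. Then the time-ordered integral Υ_T with integrand consisting of β₀ copies of f, then g₁, then β₁ copies of f, then g₂, …, then g_m, then β_m copies of f, is bounded by (T^{(Σβᵢ)/2} / ∏ᵢ βᵢ!) ‖f‖_{L²}^{Σβᵢ} · Υ_T[g₁,…,g_m]. -/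
open MeasureTheory intervalIntegral

/-- `interleave f (β₀ :: β₁ :: ⋯ :: β_m :: []) [g₁,…,g_m]` is the list consisting of
`β₀` copies of `f`, then `g₁`, then `β₁` copies of `f`, then `g₂`, …, then `g_m`,
then `β_m` copies of `f`. -/
def interleave (f : ℝ → ℝ) : List ℕ → List (ℝ → ℝ) → List (ℝ → ℝ)
  | [], _ => []
  | b :: _, [] => List.replicate b f
  | b :: bs, g :: gs => List.replicate b f ++ g :: interleave f bs gs

namespace Stmt3Aux
open Set

def Elt (h : ℝ → ℝ) : Prop :=
  Measurable h ∧ (∀ x, 0 ≤ h x) ∧ ∀ t : ℝ, IntegrableOn h (Ioc 0 t)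

lemma elt_of_sq {h : ℝ → ℝ} (hm : Measurable h) (hnn : ∀ x, 0 ≤ h x)
    (hsq : IntegrableOn (fun t => h t ^ 2) (Ioi 0)) : Elt h := by
  refine ⟨hm, hnn, fun t => ?_⟩
  have h2 : IntegrableOn (fun s => h s ^ 2) (Ioc 0 t) := hsq.mono_set Ioc_subset_Ioi_self
  have hc : IntegrableOn (fun _ : ℝ => (1:ℝ)) (Ioc 0 t) :=
    integrableOn_const measure_Ioc_lt_top.ne
  have hg : IntegrableOn (fun s => (h s ^ 2 + 1) / 2) (Ioc 0 t) := (h2.add hc).div_const 2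
  refine Integrable.mono' hg hm.aestronglyMeasurable ?_
  refine Filter.Eventually.of_forall fun s => ?_
  rw [Real.norm_of_nonneg (hnn s)]
  nlinarith [sq_nonneg (h s - 1)]

def GoodT (T : ℝ) (u : ℝ → ℝ) : Prop :=
  (∀ s ∈ Icc (0:ℝ) T, 0 ≤ u s) ∧ MonotoneOn u (Icc (0:ℝ) T)

lemma integrable_mul {T : ℝ} {h u : ℝ → ℝ} (hh : Elt h) (hu : GoodT T u)
    {t : ℝ} (ht : t ∈ Icc (0:ℝ) T) :
    IntegrableOn (fun s => h s * u s) (Ioc 0 t) := by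
  have hsub : Ioc (0:ℝ) t ⊆ Icc 0 T := fun s hs => ⟨hs.1.le, hs.2.trans ht.2⟩
  have hTm : T ∈ Icc (0:ℝ) T := ⟨ht.1.trans ht.2, le_refl T⟩
  have hum : AEMeasurable u (volume.restrict (Ioc 0 t)) := by
    have h1 := aemeasurable_restrict_of_monotoneOn (μ := volume) measurableSet_Icc hu.2
    have h2 := h1.restrict (s := Ioc 0 t)
    rwa [Measure.restrict_restrict measurableSet_Ioc, inter_eq_left.mpr hsub] at h2
  refine Integrable.mono' ((hh.2.2 t).const_mul (u T))
    ((hh.1.aemeasurable.restrict.mul hum).aestronglyMeasurable) ?_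
  rw [ae_restrict_iff' measurableSet_Ioc]
  refine Filter.Eventually.of_forall fun s hs => ?_
  have hs' := hsub hs
  rw [Real.norm_of_nonneg (mul_nonneg (hh.2.1 s) (hu.1 s hs'))]
  rw [mul_comm (u T)]
  exact mul_le_mul_of_nonneg_left (hu.2 hs' hTm hs'.2) (hh.2.1 s)

lemma GoodT.step {T : ℝ} {h u : ℝ → ℝ} (hh : Elt h) (hu : GoodT T u) :
    GoodT T (fun t => ∫ s in (0:ℝ)..t, h s * u s) := by
  constructor
  · intro t ht
    apply intervalIntegral.integral_nonneg ht.1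
    intro s hs
    exact mul_nonneg (hh.2.1 s) (hu.1 s ⟨hs.1, hs.2.trans ht.2⟩)
  · intro t₁ h₁ t₂ h₂ h12
    simp only
    rw [intervalIntegral.integral_of_le h₁.1, intervalIntegral.integral_of_le (h₁.1.trans h12)]
    refine setIntegral_mono_set (integrable_mul hh hu h₂)
      ((ae_restrict_iff' measurableSet_Ioc).mpr (Filter.Eventually.of_forall
        fun s hs => mul_nonneg (hh.2.1 s) (hu.1 s ⟨hs.1.le, hs.2.trans h₂.2⟩))) ?_
    · exact (Ioc_subset_Ioc_right h12).eventuallyLE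

lemma good_ups {T : ℝ} (hT : 0 ≤ T) {L : List (ℝ → ℝ)} (hL : ∀ h ∈ L, Elt h) :
    GoodT T (fun s => Ups s L) := by
  induction L with
  | nil =>
    exact ⟨fun s _ => by simp [Ups], fun a _ b _ _ => by simp [Ups]⟩
  | cons g L ih =>
    have hg : Elt g := hL g List.mem_cons_self
    have h2 := GoodT.step hg (ih fun h hh => hL h (List.mem_cons_of_mem _ hh))
    simpa [Ups] using h2

noncomputable def FF (f : ℝ → ℝ) : ℝ → ℝ := fun t => ∫ s in Ioc (0:ℝ) t, f s

lemma FF_nonneg {f : ℝ → ℝ} (hf : Elt f) (t : ℝ) : 0 ≤ FF f t :=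
  setIntegral_nonneg measurableSet_Ioc fun s _ => hf.2.1 s

lemma FF_mono {f : ℝ → ℝ} (hf : Elt f) : Monotone (FF f) := by
  intro t₁ t₂ h
  exact setIntegral_mono_set (hf.2.2 t₂)
    ((ae_restrict_iff' measurableSet_Ioc).mpr (Filter.Eventually.of_forall
      fun s _ => hf.2.1 s)) (Ioc_subset_Ioc_right h).eventuallyLE

lemma FF_measurable {f : ℝ → ℝ} (hf : Elt f) : Measurable (FF f) :=
  (FF_mono hf).measurable

lemma integrable_f_FF_pow {f : ℝ → ℝ} (hf : Elt f) (j : ℕ) (t : ℝ) :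
    IntegrableOn (fun s => f s * FF f s ^ j) (Ioc 0 t) := by
  refine Integrable.mono' ((hf.2.2 t).const_mul (FF f t ^ j))
    (hf.1.mul ((FF_measurable hf).pow_const j)).aestronglyMeasurable ?_
  rw [ae_restrict_iff' measurableSet_Ioc]
  refine Filter.Eventually.of_forall fun s hs => ?_
  rw [Real.norm_of_nonneg (mul_nonneg (hf.2.1 s) (pow_nonneg (FF_nonneg hf s) j))]
  rw [mul_comm (FF f t ^ j)]
  exact mul_le_mul_of_nonneg_left
    (pow_le_pow_left₀ (FF_nonneg hf s) (FF_mono hf hs.2) j) (hf.2.1 s)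

lemma key1 {f : ℝ → ℝ} (hf : Elt f) :
    ∀ (j : ℕ) (t : ℝ), 0 ≤ t →
      ∫ s in Ioc (0:ℝ) t, f s * FF f s ^ j = FF f t ^ (j + 1) / ((j : ℝ) + 1) := by
  intro j
  induction j with
  | zero => intro t ht; simp [FF]
  | succ j ih =>
    intro t ht
    set S := Ioc (0:ℝ) t with hS
    set G : ℝ × ℝ → ℝ :=
      fun p => Set.indicator {q : ℝ × ℝ | q.2 ≤ q.1}
        (fun q => f q.1 * FF f q.1 ^ j * f q.2) p with hG
    have hGnn : ∀ p, 0 ≤ G p := fun p =>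
      Set.indicator_nonneg (fun q _ =>
        mul_nonneg (mul_nonneg (hf.2.1 _) (pow_nonneg (FF_nonneg hf _) j)) (hf.2.1 _)) p
    have hGmeas : Measurable G := by
      refine Measurable.indicator ?_ (measurableSet_le measurable_snd measurable_fst)
      exact ((hf.1.comp measurable_fst).mul
        (((FF_measurable hf).pow_const j).comp measurable_fst)).mul (hf.1.comp measurable_snd)
    have hGint : Integrable G ((volume.restrict S).prod (volume.restrict S)) := by
      refine Integrable.mono' (((hf.2.2 t).mul_prod (hf.2.2 t)).const_mul (FF f t ^ j))
        hGmeas.aestronglyMeasurable ?_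
      rw [Measure.prod_restrict, ae_restrict_iff' (measurableSet_Ioc.prod measurableSet_Ioc)]
      refine Filter.Eventually.of_forall fun p hp => ?_
      rw [Real.norm_of_nonneg (hGnn p)]
      obtain ⟨hp1, hp2⟩ := hp
      by_cases hc : p.2 ≤ p.1
      · rw [hG]; simp only [Set.indicator_of_mem (by exact hc : p ∈ {q : ℝ × ℝ | q.2 ≤ q.1})]
        have h1 : FF f p.1 ^ j ≤ FF f t ^ j :=
          pow_le_pow_left₀ (FF_nonneg hf _) (FF_mono hf hp1.2) j
        calc f p.1 * FF f p.1 ^ j * f p.2 ≤ f p.1 * FF f t ^ j * f p.2 := by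
              exact mul_le_mul_of_nonneg_right
                (mul_le_mul_of_nonneg_left h1 (hf.2.1 _)) (hf.2.1 _)
          _ = FF f t ^ j * (f p.1 * f p.2) := by ring
      · rw [hG]; simp only [Set.indicator_of_notMem (by exact hc : p ∉ {q : ℝ × ℝ | q.2 ≤ q.1})]
        exact mul_nonneg (pow_nonneg (FF_nonneg hf t) j) (mul_nonneg (hf.2.1 _) (hf.2.1 _))
    have hstep1 : ∀ s ∈ S, (∫ u in S, G (s, u)) = f s * FF f s ^ (j + 1) := by
      intro s hs
      have h1 : (fun u => G (s, u)) = Set.indicator (Iic s) (fun u => f s * FF f s ^ j * f u) := by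
        funext u
        by_cases hc : u ≤ s <;> simp [hG, Set.indicator, hc, Set.mem_setOf_eq]
      rw [h1, setIntegral_indicator measurableSet_Iic, hS, Ioc_inter_Iic,
        inf_eq_right.mpr hs.2]
      rw [MeasureTheory.integral_const_mul]
      show f s * FF f s ^ j * FF f s = _
      ring
    have hstep2 : ∀ u ∈ S, (∫ s in S, G (s, u)) =
        f u * ((FF f t ^ (j + 1) - FF f u ^ (j + 1)) / ((j : ℝ) + 1)) := by
      intro u hu
      have h1 : (fun s => G (s, u)) = Set.indicator (Ici u) (fun s => f s * FF f s ^ j * f u) := by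
        funext s
        by_cases hc : u ≤ s <;> simp [hG, Set.indicator, hc, Set.mem_setOf_eq]
      have h2 : S ∩ Ici u = Icc u t := by
        ext s
        simp only [hS, mem_inter_iff, mem_Ioc, mem_Ici, mem_Icc]
        constructor
        · rintro ⟨⟨_, hst⟩, hus⟩; exact ⟨hus, hst⟩
        · rintro ⟨hus, hst⟩; exact ⟨⟨lt_of_lt_of_le hu.1 hus, hst⟩, hus⟩
      rw [h1, setIntegral_indicator measurableSet_Ici, h2, integral_Icc_eq_integral_Ioc,
        MeasureTheory.integral_mul_const]
      have h3 : (∫ s in Ioc (0:ℝ) u, f s * FF f s ^ j) + ∫ s in Ioc u t, f s * FF f s ^ j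
          = ∫ s in Ioc (0:ℝ) t, f s * FF f s ^ j := by
        rw [← setIntegral_union (Ioc_disjoint_Ioc_of_le le_rfl) measurableSet_Ioc
          (integrable_f_FF_pow hf j u)
          ((integrable_f_FF_pow hf j t).mono_set (Ioc_subset_Ioc_left hu.1.le)),
          Ioc_union_Ioc_eq_Ioc hu.1.le hu.2]
      have h4 : ∫ s in Ioc u t, f s * FF f s ^ j
          = FF f t ^ (j + 1) / ((j : ℝ) + 1) - FF f u ^ (j + 1) / ((j : ℝ) + 1) := by
        rw [← ih t ht, ← ih u hu.1.le]; linarith [h3]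
      rw [h4]; ring
    have hA : (∫ s in S, f s * FF f s ^ (j + 1)) = ∫ s in S, ∫ u in S, G (s, u) :=
      (setIntegral_congr_fun measurableSet_Ioc fun s hs => (hstep1 s hs).symm)
    have hswap : (∫ s in S, ∫ u in S, G (s, u)) = ∫ u in S, ∫ s in S, G (s, u) :=
      integral_integral_swap hGint
    have hB : (∫ u in S, ∫ s in S, G (s, u))
        = ∫ u in S, f u * ((FF f t ^ (j + 1) - FF f u ^ (j + 1)) / ((j : ℝ) + 1)) :=
      setIntegral_congr_fun measurableSet_Ioc fun u hu => hstep2 u hu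
    have hsplit : (∫ u in S, f u * ((FF f t ^ (j + 1) - FF f u ^ (j + 1)) / ((j : ℝ) + 1)))
        = (FF f t ^ (j + 1) / ((j : ℝ) + 1)) * FF f t
          - (1 / ((j : ℝ) + 1)) * ∫ u in S, f u * FF f u ^ (j + 1) := by
      have heq : ∀ u : ℝ, f u * ((FF f t ^ (j + 1) - FF f u ^ (j + 1)) / ((j : ℝ) + 1))
          = (FF f t ^ (j + 1) / ((j : ℝ) + 1)) * f u
            - (1 / ((j : ℝ) + 1)) * (f u * FF f u ^ (j + 1)) := fun u => by ring
      simp_rw [heq]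
      rw [integral_sub ((hf.2.2 t).const_mul _) ((integrable_f_FF_pow hf (j + 1) t).const_mul _),
        MeasureTheory.integral_const_mul, MeasureTheory.integral_const_mul]
      rfl
    have hfin : (∫ s in S, f s * FF f s ^ (j + 1))
        = (FF f t ^ (j + 1) / ((j : ℝ) + 1)) * FF f t
          - (1 / ((j : ℝ) + 1)) * ∫ s in S, f s * FF f s ^ (j + 1) := by
      calc (∫ s in S, f s * FF f s ^ (j + 1)) = ∫ s in S, ∫ u in S, G (s, u) := hA
        _ = ∫ u in S, ∫ s in S, G (s, u) := hswap
        _ = ∫ u in S, f u * ((FF f t ^ (j + 1) - FF f u ^ (j + 1)) / ((j : ℝ) + 1)) := hB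
        _ = _ := hsplit
    have hj : ((j : ℝ) + 1) ≠ 0 := by positivity
    have hj2 : ((j : ℝ) + 2) ≠ 0 := by positivity
    have : (∫ s in S, f s * FF f s ^ (j + 1)) * ((j : ℝ) + 2)
        = FF f t ^ (j + 1) * FF f t := by
      field_simp at hfin
      linarith
    have hpow : FF f t ^ (j + 1) * FF f t = FF f t ^ (j + 1 + 1) := by ring
    push_cast
    rw [eq_div_iff (by push_cast; linarith : ((j : ℝ) + 1 + 1) ≠ 0)]
    push_cast
    rw [← hpow]
    linarith [this]

lemma FF_le {f : ℝ → ℝ} (hf : Elt f)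
    (hsq : IntegrableOn (fun s => f s ^ 2) (Ioi 0)) {t : ℝ} (ht : 0 ≤ t) :
    FF f t ≤ Real.sqrt t * L2NormIoi f := by
  have hconj : (2:ℝ).HolderConjugate 2 := ⟨by norm_num, by norm_num, by norm_num⟩
  haveI : IsFiniteMeasure (volume.restrict (Ioc (0:ℝ) t)) :=
    ⟨by rw [Measure.restrict_apply_univ]; exact measure_Ioc_lt_top⟩
  have hsq' : IntegrableOn (fun s => f s ^ 2) (Ioc 0 t) := hsq.mono_set Ioc_subset_Ioi_self
  have hmem : MemLp f (ENNReal.ofReal 2) (volume.restrict (Ioc (0:ℝ) t)) := by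
    rw [show ENNReal.ofReal 2 = 2 by norm_num]
    exact (memLp_two_iff_integrable_sq hf.1.aestronglyMeasurable).mpr hsq'
  have hmem1 : MemLp (fun _ : ℝ => (1:ℝ)) (ENNReal.ofReal 2)
      (volume.restrict (Ioc (0:ℝ) t)) := memLp_const 1
  have hCS := integral_mul_le_Lp_mul_Lq_of_nonneg hconj
    (Filter.Eventually.of_forall hf.2.1)
    (Filter.Eventually.of_forall fun _ => zero_le_one) hmem hmem1
  simp only [mul_one] at hCS
  have h1 : (∫ a in Ioc (0:ℝ) t, f a ^ (2:ℝ)) = ∫ a in Ioc (0:ℝ) t, f a ^ 2 := by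
    refine integral_congr_ae (Filter.Eventually.of_forall fun a => ?_)
    show f a ^ (2:ℝ) = f a ^ 2
    rw [show (2:ℝ) = ((2:ℕ):ℝ) by norm_num, Real.rpow_natCast]
  have h2 : (∫ _ in Ioc (0:ℝ) t, (1:ℝ) ^ (2:ℝ)) = t := by
    simp [Real.one_rpow, Real.volume_Ioc, ENNReal.toReal_ofReal ht, ht]
  rw [h1, h2] at hCS
  have h3 : (∫ a in Ioc (0:ℝ) t, f a ^ 2) ≤ ∫ a in Ioi (0:ℝ), f a ^ 2 :=
    setIntegral_mono_set hsq
      ((ae_restrict_iff' measurableSet_Ioi).mpr (Filter.Eventually.of_forall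
        fun s _ => sq_nonneg (f s))) Ioc_subset_Ioi_self.eventuallyLE
  have h4 : (∫ a in Ioc (0:ℝ) t, f a ^ 2) ^ ((1:ℝ)/2) ≤ (∫ a in Ioi (0:ℝ), f a ^ 2) ^ ((1:ℝ)/2) := by
    apply Real.rpow_le_rpow (setIntegral_nonneg measurableSet_Ioc fun s _ => sq_nonneg (f s)) h3
    norm_num
  calc FF f t ≤ (∫ a in Ioc (0:ℝ) t, f a ^ 2) ^ (1/(2:ℝ)) * t ^ (1/(2:ℝ)) := hCS
    _ ≤ (∫ a in Ioi (0:ℝ), f a ^ 2) ^ (1/(2:ℝ)) * t ^ (1/(2:ℝ)) := by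
        apply mul_le_mul_of_nonneg_right h4 (Real.rpow_nonneg ht _)
    _ = Real.sqrt t * L2NormIoi f := by
        rw [L2NormIoi, Real.sqrt_eq_rpow, Real.sqrt_eq_rpow]; ring

lemma ups_cons (t : ℝ) (g : ℝ → ℝ) (L : List (ℝ → ℝ)) :
    Ups t (g :: L) = ∫ s in (0:ℝ)..t, g s * Ups s L := rfl

lemma iter_bound {T : ℝ} (hT : 0 ≤ T) {f : ℝ → ℝ} (hf : Elt f)
    {L : List (ℝ → ℝ)} (hL : ∀ h ∈ L, Elt h) {v : ℝ → ℝ} (hv : GoodT T v)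
    {c : ℝ} (hc : 0 ≤ c) (hb : ∀ s ∈ Icc (0:ℝ) T, Ups s L ≤ c * v s) :
    ∀ (b : ℕ), ∀ t ∈ Icc (0:ℝ) T,
      Ups t (List.replicate b f ++ L) ≤ c * v t * FF f t ^ b / (b.factorial) := by
  intro b
  induction b with
  | zero => intro t ht; simpa using hb t ht
  | succ b ih =>
    intro t ht
    have hrepl : List.replicate (b+1) f ++ L = f :: (List.replicate b f ++ L) := rfl
    rw [hrepl, ups_cons]
    have hElts : ∀ h ∈ List.replicate b f ++ L, Elt h := by
      intro h hh
      rcases List.mem_append.mp hh with h1 | h2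
      · rw [List.eq_of_mem_replicate h1]; exact hf
      · exact hL h h2
    have hGood := good_ups (T := T) hT hElts
    have hInt1 : IntervalIntegrable (fun s => f s * Ups s (List.replicate b f ++ L)) volume 0 t :=
      (intervalIntegrable_iff_integrableOn_Ioc_of_le ht.1).mpr (integrable_mul hf hGood ht)
    have hInt2 : IntervalIntegrable
        (fun s => (c * v t / b.factorial) * (f s * FF f s ^ b)) volume 0 t :=
      (intervalIntegrable_iff_integrableOn_Ioc_of_le ht.1).mpr
        ((integrable_f_FF_pow hf b t).const_mul _)
    have hvt : 0 ≤ v t := hv.1 t ht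
    have hfac : (0:ℝ) < b.factorial := by exact_mod_cast Nat.factorial_pos b
    have hR : (∫ s in (0:ℝ)..t, f s * FF f s ^ b) = FF f t ^ (b+1) / ((b:ℝ)+1) := by
      rw [intervalIntegral.integral_of_le ht.1]; exact key1 hf b t ht.1
    have hmono := intervalIntegral.integral_mono_on ht.1 hInt1 hInt2 ?_
    · rw [intervalIntegral.integral_const_mul, hR] at hmono
      refine hmono.trans (le_of_eq ?_)
      rw [Nat.factorial_succ]
      have hb1 : ((b:ℝ)+1) ≠ 0 := by positivity
      have hbf : ((b.factorial:ℝ)) ≠ 0 := ne_of_gt hfac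
      push_cast
      field_simp
    · intro s hs
      have hsT : s ∈ Icc (0:ℝ) T := ⟨hs.1, hs.2.trans ht.2⟩
      have h1 := ih s hsT
      have h2 : c * v s * FF f s ^ b / b.factorial ≤ c * v t * FF f s ^ b / b.factorial := by
        apply div_le_div_of_nonneg_right ?_ hfac.le
        exact mul_le_mul_of_nonneg_right
          (mul_le_mul_of_nonneg_left (hv.2 hsT ht hs.2) hc)
          (pow_nonneg (FF_nonneg hf s) b)
      calc f s * Ups s (List.replicate b f ++ L)
          ≤ f s * (c * v t * FF f s ^ b / b.factorial) :=
            mul_le_mul_of_nonneg_left (h1.trans h2) (hf.2.1 s)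
        _ = c * v t / b.factorial * (f s * FF f s ^ b) := by ring

lemma mem_interleave {f : ℝ → ℝ} :
    ∀ (βs : List ℕ) (gs : List (ℝ → ℝ)) (h : ℝ → ℝ),
      h ∈ interleave f βs gs → h = f ∨ h ∈ gs := by
  intro βs
  induction βs with
  | nil => intro gs h hh; simp [interleave] at hh
  | cons b bs ih =>
    intro gs h hh
    cases gs with
    | nil =>
      exact Or.inl (List.eq_of_mem_replicate (by simpa [interleave] using hh))
    | cons g gs' =>
      rw [interleave] at hh
      rcases List.mem_append.mp hh with h1 | h2
      · exact Or.inl (List.eq_of_mem_replicate h1)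
      · rcases List.mem_cons.mp h2 with h3 | h4
        · exact Or.inr (by rw [h3]; exact List.mem_cons_self)
        · rcases ih gs' h h4 with h5 | h6
          · exact Or.inl h5
          · exact Or.inr (List.mem_cons_of_mem _ h6)

lemma sqrtT_pow {T : ℝ} (hT : 0 ≤ T) (b : ℕ) : T ^ ((b : ℝ) / 2) = Real.sqrt T ^ b := by
  rw [Real.sqrt_eq_rpow, ← Real.rpow_natCast (T ^ ((1:ℝ)/2)) b, ← Real.rpow_mul hT]
  congr 1
  ring

lemma FF_pow_le {T : ℝ} (hT : 0 ≤ T) {f : ℝ → ℝ} (hf : Elt f)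
    (hsq : IntegrableOn (fun s => f s ^ 2) (Ioi 0)) {t : ℝ} (ht : t ∈ Icc (0:ℝ) T) (b : ℕ) :
    FF f t ^ b ≤ T ^ ((b : ℝ) / 2) * L2NormIoi f ^ b := by
  have h1 : FF f t ≤ Real.sqrt T * L2NormIoi f :=
    (FF_mono hf ht.2).trans (FF_le hf hsq hT)
  calc FF f t ^ b ≤ (Real.sqrt T * L2NormIoi f) ^ b :=
        pow_le_pow_left₀ (FF_nonneg hf t) h1 b
    _ = T ^ ((b : ℝ) / 2) * L2NormIoi f ^ b := by rw [mul_pow, sqrtT_pow hT]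

lemma L2_nonneg (f : ℝ → ℝ) : 0 ≤ L2NormIoi f := Real.sqrt_nonneg _

lemma main_aux {T : ℝ} (hT : 0 < T) {f : ℝ → ℝ} (hf : Elt f)
    (hsq : IntegrableOn (fun s => f s ^ 2) (Ioi 0)) :
    ∀ (gs : List (ℝ → ℝ)) (βs : List ℕ), βs.length = gs.length + 1 →
      (∀ g ∈ gs, Elt g) → ∀ t ∈ Icc (0:ℝ) T,
      Ups t (interleave f βs gs) ≤
        T ^ ((βs.sum : ℝ) / 2) / ((βs.map Nat.factorial).prod : ℕ) *
          L2NormIoi f ^ βs.sum * Ups t gs := by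
  intro gs
  induction gs with
  | nil =>
    rintro (_ | ⟨b, bs⟩) hlen hgs t ht
    · simp at hlen
    · have hbs : bs = [] := by simpa using hlen
      subst hbs
      have h1 : Ups t (interleave f [b] []) ≤ 1 * 1 * FF f t ^ b / b.factorial := by
        have h0 := iter_bound hT.le hf (L := []) (by simp) (v := fun _ => 1)
          ⟨fun _ _ => zero_le_one, fun _ _ _ _ _ => le_refl 1⟩ zero_le_one
          (fun s _ => by simp [Ups]) b t ht
        simpa [interleave] using h0
      have h2 : FF f t ^ b ≤ T ^ ((b : ℝ) / 2) * L2NormIoi f ^ b := FF_pow_le hT.le hf hsq ht b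
      have hfac : (0:ℝ) < b.factorial := by exact_mod_cast Nat.factorial_pos b
      simp only [Ups, List.sum_cons, List.sum_nil, List.map_cons, List.map_nil,
        List.prod_cons, List.prod_nil, mul_one, Nat.add_zero]
      calc Ups t (interleave f [b] []) ≤ FF f t ^ b / b.factorial := by
            simpa using h1
        _ ≤ (T ^ ((b : ℝ) / 2) * L2NormIoi f ^ b) / b.factorial :=
            div_le_div_of_nonneg_right h2 hfac.le
        _ = T ^ ((b : ℝ) / 2) / (b.factorial : ℕ) * L2NormIoi f ^ b := by ring
  | cons g gs' ih =>
    rintro (_ | ⟨b, bs⟩) hlen hgs t ht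
    · simp at hlen
    · have hlen' : bs.length = gs'.length + 1 := by simpa using hlen
      have hg : Elt g := hgs g List.mem_cons_self
      have hgs' : ∀ h ∈ gs', Elt h := fun h hh => hgs h (List.mem_cons_of_mem _ hh)
      set K : ℝ := T ^ ((bs.sum : ℝ) / 2) / ((bs.map Nat.factorial).prod : ℕ) *
        L2NormIoi f ^ bs.sum with hK
      have hKnn : 0 ≤ K := by
        apply mul_nonneg
        apply div_nonneg (Real.rpow_nonneg hT.le _) (Nat.cast_nonneg _)
        exact pow_nonneg (L2_nonneg f) _
      have hIH := ih bs hlen' hgs'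
      -- elements of the inner list
      have hIL : ∀ h ∈ interleave f bs gs', Elt h := by
        intro h hh
        rcases mem_interleave bs gs' h hh with h1 | h2
        · rw [h1]; exact hf
        · exact hgs' h h2
      have hLmem : ∀ h ∈ g :: interleave f bs gs', Elt h := by
        intro h hh
        rcases List.mem_cons.mp hh with h1 | h2
        · rw [h1]; exact hg
        · exact hIL h h2
      have hGoodIn := good_ups (T := T) hT.le hIL
      have hGoodGs' := good_ups (T := T) hT.le hgs'
      have hGoodV := good_ups (T := T) hT.le (L := g :: gs')
        (fun h hh => by rcases List.mem_cons.mp hh with h1 | h2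
                        · rw [h1]; exact hg
                        · exact hgs' h h2)
      -- premise of iter_bound
      have hb : ∀ s ∈ Icc (0:ℝ) T, Ups s (g :: interleave f bs gs') ≤ K * Ups s (g :: gs') := by
        intro s hs
        rw [ups_cons, ups_cons]
        have hInt1 : IntervalIntegrable (fun u => g u * Ups u (interleave f bs gs')) volume 0 s :=
          (intervalIntegrable_iff_integrableOn_Ioc_of_le hs.1).mpr (integrable_mul hg hGoodIn hs)
        have hInt2 : IntervalIntegrable (fun u => K * (g u * Ups u gs')) volume 0 s :=
          (intervalIntegrable_iff_integrableOn_Ioc_of_le hs.1).mpr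
            ((integrable_mul hg hGoodGs' hs).const_mul K)
        have := intervalIntegral.integral_mono_on hs.1 hInt1 hInt2 ?_
        · rwa [intervalIntegral.integral_const_mul] at this
        · intro u hu
          have huT : u ∈ Icc (0:ℝ) T := ⟨hu.1, hu.2.trans hs.2⟩
          calc g u * Ups u (interleave f bs gs') ≤ g u * (K * Ups u gs') :=
                mul_le_mul_of_nonneg_left (hIH u huT) (hg.2.1 u)
            _ = K * (g u * Ups u gs') := by ring
      have hmain := iter_bound hT.le hf hLmem hGoodV hKnn hb b t ht
      have hinterleq : interleave f (b :: bs) (g :: gs')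
          = List.replicate b f ++ g :: interleave f bs gs' := rfl
      rw [hinterleq]
      refine hmain.trans ?_
      have hvt : 0 ≤ Ups t (g :: gs') := hGoodV.1 t ht
      have hFFb := FF_pow_le hT.le hf hsq ht b
      have hfac : (0:ℝ) < b.factorial := by exact_mod_cast Nat.factorial_pos b
      have h5 : K * Ups t (g :: gs') * FF f t ^ b / b.factorial
          ≤ K * Ups t (g :: gs') * (T ^ ((b : ℝ) / 2) * L2NormIoi f ^ b) / b.factorial := by
        apply div_le_div_of_nonneg_right ?_ hfac.le
        exact mul_le_mul_of_nonneg_left hFFb (mul_nonneg hKnn hvt)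
      refine h5.trans (le_of_eq ?_)
      -- arithmetic rearrangement
      have hsum : ((b :: bs).sum : ℝ) = (b : ℝ) + (bs.sum : ℝ) := by push_cast; simp
      have hrpow : T ^ (((b :: bs).sum : ℝ) / 2)
          = T ^ ((b : ℝ) / 2) * T ^ ((bs.sum : ℝ) / 2) := by
        rw [hsum, show ((b:ℝ) + (bs.sum:ℝ)) / 2 = (b:ℝ)/2 + (bs.sum:ℝ)/2 by ring,
          Real.rpow_add hT]
      have hprod : (((b :: bs).map Nat.factorial).prod : ℝ)
          = (b.factorial : ℝ) * ((bs.map Nat.factorial).prod : ℝ) := by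
        simp [List.map_cons, List.prod_cons]
      have hpow : L2NormIoi f ^ (b :: bs).sum = L2NormIoi f ^ b * L2NormIoi f ^ bs.sum := by
        simp [List.sum_cons, pow_add]
      rw [hK, hrpow, hpow]
      rw [show (((b :: bs).map Nat.factorial).prod : ℕ) = b.factorial * (bs.map Nat.factorial).prod
        by simp]
      push_cast
      have hprodpos : 0 < (bs.map Nat.factorial).prod := by
        apply List.prod_pos
        intro x hx
        rcases List.mem_map.mp hx with ⟨y, _, hy⟩
        rw [← hy]; exact Nat.factorial_pos y
      have hfacs : ((bs.map Nat.factorial).prod : ℝ) ≠ 0 := by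
        exact_mod_cast Nat.pos_iff_ne_zero.mp hprodpos
      field_simp

end Stmt3Aux

theorem stmt3 (T : ℝ) (hT : 0 < T) (f : ℝ → ℝ) (gs : List (ℝ → ℝ)) (βs : List ℕ)
    (hlen : βs.length = gs.length + 1)
    (hfnonneg : ∀ t : ℝ, 0 ≤ f t)
    (hfL2 : IntegrableOn (fun t => (f t) ^ 2) (Set.Ioi (0:ℝ)))
    (hfmeas : Measurable f)
    (hnonneg : ∀ g ∈ gs, ∀ t : ℝ, 0 ≤ g t)
    (hL2 : ∀ g ∈ gs, IntegrableOn (fun t => (g t) ^ 2) (Set.Ioi (0:ℝ)))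
    (hmeas : ∀ g ∈ gs, Measurable g) :
    Ups T (interleave f βs gs) ≤
      (T ^ ((βs.sum : ℝ) / 2) / (βs.map Nat.factorial).prod) *
        (L2NormIoi f) ^ βs.sum * Ups T gs := by
  have hf : Stmt3Aux.Elt f := Stmt3Aux.elt_of_sq hfmeas hfnonneg hfL2
  have hgs : ∀ g ∈ gs, Stmt3Aux.Elt g := fun g hg =>
    Stmt3Aux.elt_of_sq (hmeas g hg) (hnonneg g hg) (hL2 g hg)
  exact Stmt3Aux.main_aux hT hf hfL2 gs βs hlen hgs T ⟨hT.le, le_refl T⟩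
end

section
/- Let A, W be fixed N×N complex matrices with W unitary, and define J_F : U(N) → ℝ by J_F(U) = ‖(U − W)A‖², where ‖·‖ is the Frobenius norm. Then U ∈ U(N) is a critical point of J_F (with respect to the bi-invariant Riemannian metric induced by the real Hilbert–Schmidt inner product) if and only if U A A† W† U = W A A†, equivalently the gradient UAA†W†U − WAA† vanishes. -/
open Matrix

/-- The landscape `J_F(U) = ‖(U − W)A‖²` (squared Frobenius norm). -/
noncomputable def JF {N : ℕ} (A W : Matrix (Fin N) (Fin N) ℂ)
    (U : Matrix (Fin N) (Fin N) ℂ) : ℝ :=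
  (Matrix.trace (((U - W) * A)ᴴ * ((U - W) * A))).re

section Aux

attribute [local instance] Matrix.linftyOpNormedRing Matrix.linftyOpNormedAlgebra

lemma aux_hasDerivAt {N : ℕ} (S M : Matrix (Fin N) (Fin N) ℂ) :
    HasDerivAt (fun t : ℝ => (Matrix.trace (NormedSpace.exp (t • S) * M)).re)
      ((Matrix.trace (S * M)).re) 0 := by
  have hexp : HasDerivAt (fun t : ℝ => NormedSpace.exp (t • S)) S 0 := by
    have h := hasDerivAt_exp_smul_const (𝕂 := ℝ) S 0
    simp only [zero_smul, NormedSpace.exp_zero, one_mul] at h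
    exact h
  let φ : Matrix (Fin N) (Fin N) ℂ →ₗ[ℝ] ℝ :=
    { toFun := fun X => (Matrix.trace (X * M)).re
      map_add' := fun X Y => by simp [add_mul]
      map_smul' := fun r X => by
        simp [Matrix.smul_mul, Complex.smul_re] }
  have := (φ.toContinuousLinearMap.hasFDerivAt
      (x := NormedSpace.exp ((0 : ℝ) • S))).comp_hasDerivAt 0 hexp
  exact this

end Aux

lemma trace_re_conjTranspose {N : ℕ} (X : Matrix (Fin N) (Fin N) ℂ) :
    (Matrix.trace Xᴴ).re = (Matrix.trace X).re := by
  rw [Matrix.trace_conjTranspose]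
  exact Complex.conj_re _

lemma trace_expand {N : ℕ} (A V W : Matrix (Fin N) (Fin N) ℂ)
    (hV : Vᴴ * V = 1) (hW : Wᴴ * W = 1) :
    (Matrix.trace (((V - W) * A)ᴴ * ((V - W) * A))).re
      = 2 * (Matrix.trace (Aᴴ * A)).re - 2 * (Matrix.trace (Vᴴ * (W * (A * Aᴴ)))).re := by
  have e1 : ((V - W) * A)ᴴ * ((V - W) * A)
      = Aᴴ * (Vᴴ * V) * A - Aᴴ * (Vᴴ * W) * A - Aᴴ * (Wᴴ * V) * A + Aᴴ * (Wᴴ * W) * A := by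
    simp only [conjTranspose_mul, conjTranspose_sub]
    noncomm_ring
  have e2 : Matrix.trace (Aᴴ * (Vᴴ * W) * A) = Matrix.trace (Vᴴ * (W * (A * Aᴴ))) := by
    rw [Matrix.trace_mul_cycle, Matrix.trace_mul_comm]
    noncomm_ring
  have e3 : (Matrix.trace (Aᴴ * (Wᴴ * V) * A)).re = (Matrix.trace (Vᴴ * (W * (A * Aᴴ)))).re := by
    have h : (Aᴴ * (Wᴴ * V) * A)ᴴ = Aᴴ * (Vᴴ * W) * A := by
      simp only [conjTranspose_mul, conjTranspose_conjTranspose]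
      noncomm_ring
    rw [← e2, ← h, trace_re_conjTranspose]
  rw [e1, hV, hW]
  simp only [Matrix.trace_add, Matrix.trace_sub, Matrix.mul_one, Complex.add_re, Complex.sub_re,
    e2, e3]
  ring

lemma exp_skew_conjTranspose {N : ℕ} (S : Matrix (Fin N) (Fin N) ℂ) (hS : Sᴴ = -S) (t : ℝ) :
    (NormedSpace.exp (t • S))ᴴ = NormedSpace.exp (t • (-S)) := by
  rw [← Matrix.exp_conjTranspose]
  congr 1
  rw [Matrix.conjTranspose_smul, hS, star_trivial]

lemma exp_skew_unitary {N : ℕ} (S : Matrix (Fin N) (Fin N) ℂ) (hS : Sᴴ = -S) (t : ℝ) :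
    (NormedSpace.exp (t • S))ᴴ * NormedSpace.exp (t • S) = 1 := by
  rw [exp_skew_conjTranspose S hS t, ← Matrix.exp_add_of_commute]
  · simp
  · simpa [smul_neg] using (Commute.refl (t • S)).neg_left

/-- entrywise positivity : if `Re tr (K Kᴴ) = 0` then `K = 0`. -/
lemma eq_zero_of_trace_mul_conjTranspose {N : ℕ} (K : Matrix (Fin N) (Fin N) ℂ)
    (h : (Matrix.trace (K * Kᴴ)).re = 0) : K = 0 := by
  have ht : (Matrix.trace (K * Kᴴ)).re
      = ∑ i, ∑ j, Complex.normSq (K i j) := by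
    simp only [Matrix.trace, Matrix.diag, Matrix.mul_apply, Matrix.conjTranspose_apply]
    rw [Complex.re_sum]
    congr 1; ext i
    rw [Complex.re_sum]
    congr 1; ext j
    rw [show star (K i j) = (starRingEnd ℂ) (K i j) from rfl, Complex.mul_conj,
      Complex.ofReal_re]
  rw [ht] at h
  have hz : ∀ i ∈ Finset.univ, ∀ j ∈ Finset.univ, Complex.normSq (K i j) = 0 := by
    have h1 : ∀ i ∈ (Finset.univ : Finset (Fin N)),
        ∑ j, Complex.normSq (K i j) = 0 := by
      intro i _
      have := (Finset.sum_eq_zero_iff_of_nonneg (fun i _ =>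
        Finset.sum_nonneg fun j _ => Complex.normSq_nonneg (K i j))).mp h
      exact this i (Finset.mem_univ i)
    intro i hi j _
    exact (Finset.sum_eq_zero_iff_of_nonneg fun j _ => Complex.normSq_nonneg (K i j)).mp
      (h1 i hi) j (Finset.mem_univ j)
  ext i j
  simpa using Complex.normSq_eq_zero.mp (hz i (Finset.mem_univ i) j (Finset.mem_univ j))

theorem stmt6 (N : ℕ) (A W : Matrix (Fin N) (Fin N) ℂ)
    (hW : W ∈ Matrix.unitaryGroup (Fin N) ℂ)
    (U : Matrix (Fin N) (Fin N) ℂ) (hU : U ∈ Matrix.unitaryGroup (Fin N) ℂ) :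
    (∀ S : Matrix (Fin N) (Fin N) ℂ, Sᴴ = -S →
        deriv (fun t : ℝ => JF A W (U * NormedSpace.exp (t • S))) 0 = 0) ↔
      U * A * Aᴴ * Wᴴ * U = W * A * Aᴴ := by
  have hU1 : Uᴴ * U = 1 := by
    simpa [Matrix.star_eq_conjTranspose] using hU.1
  have hU2 : U * Uᴴ = 1 := by
    simpa [Matrix.star_eq_conjTranspose] using hU.2
  have hW1 : Wᴴ * W = 1 := by
    simpa [Matrix.star_eq_conjTranspose] using hW.1
  obtain ⟨M, hM⟩ : ∃ M : Matrix (Fin N) (Fin N) ℂ, M = Uᴴ * (W * (A * Aᴴ)) := ⟨_, rfl⟩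
  -- Step 1 : the derivative computation.
  have hderiv : ∀ S : Matrix (Fin N) (Fin N) ℂ, Sᴴ = -S →
      deriv (fun t : ℝ => JF A W (U * NormedSpace.exp (t • S))) 0
        = 2 * (Matrix.trace (S * M)).re := by
    intro S hS
    have hfun : (fun t : ℝ => JF A W (U * NormedSpace.exp (t • S)))
        = fun t : ℝ => 2 * (Matrix.trace (Aᴴ * A)).re
            - 2 * (Matrix.trace (NormedSpace.exp (t • (-S)) * M)).re := by
      funext t
      have hV : (U * NormedSpace.exp (t • S))ᴴ * (U * NormedSpace.exp (t • S)) = 1 := by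
        rw [Matrix.conjTranspose_mul]
        calc (NormedSpace.exp (t • S))ᴴ * Uᴴ * (U * NormedSpace.exp (t • S))
            = (NormedSpace.exp (t • S))ᴴ * (Uᴴ * U) * NormedSpace.exp (t • S) := by
              noncomm_ring
          _ = (NormedSpace.exp (t • S))ᴴ * NormedSpace.exp (t • S) := by
              rw [hU1]; noncomm_ring
          _ = 1 := exp_skew_unitary S hS t
      have := trace_expand A (U * NormedSpace.exp (t • S)) W hV hW1
      rw [JF, this]
      congr 2
      rw [Matrix.conjTranspose_mul, exp_skew_conjTranspose S hS t, hM]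
      noncomm_ring
    rw [hfun]
    have h1 : HasDerivAt (fun t : ℝ => 2 * (Matrix.trace (Aᴴ * A)).re
        - 2 * (Matrix.trace (NormedSpace.exp (t • (-S)) * M)).re)
        (0 - 2 * (Matrix.trace ((-S) * M)).re) 0 :=
      (hasDerivAt_const 0 _).sub ((aux_hasDerivAt (-S) M).const_mul 2)
    rw [h1.deriv]
    simp only [Matrix.neg_mul, Matrix.trace_neg, Complex.neg_re]
    ring
  constructor
  · intro h
    have key : ∀ S : Matrix (Fin N) (Fin N) ℂ, Sᴴ = -S → (Matrix.trace (S * M)).re = 0 := by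
      intro S hS
      have h2 := h S hS
      rw [hderiv S hS] at h2
      linarith
    obtain ⟨K, hK⟩ : ∃ K : Matrix (Fin N) (Fin N) ℂ, K = M - Mᴴ := ⟨_, rfl⟩
    have hKskew : Kᴴ = -K := by
      rw [hK, Matrix.conjTranspose_sub, conjTranspose_conjTranspose, neg_sub]
    have h1 : (Matrix.trace (K * M)).re = 0 := key K hKskew
    have h2 : Matrix.trace (K * Mᴴ) = -star (Matrix.trace (K * M)) := by
      rw [← Matrix.trace_conjTranspose, Matrix.conjTranspose_mul, hKskew,
        Matrix.mul_neg, Matrix.trace_neg, neg_neg, Matrix.trace_mul_comm]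
    have hKK : (Matrix.trace (K * Kᴴ)).re = 0 := by
      have e : K * Kᴴ = K * Mᴴ - K * M := by
        rw [hKskew, hK, neg_sub, Matrix.mul_sub]
      rw [e, Matrix.trace_sub, Complex.sub_re, h2]
      simp [Complex.star_def, Complex.conj_re, h1]
    have hK0 : K = 0 := eq_zero_of_trace_mul_conjTranspose K hKK
    have hMherm : M = Mᴴ := by
      have := hK ▸ hK0
      exact sub_eq_zero.mp this
    calc U * A * Aᴴ * Wᴴ * U = U * Mᴴ := by
          rw [hM]
          simp only [Matrix.conjTranspose_mul, conjTranspose_conjTranspose]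
          noncomm_ring
      _ = U * M := by rw [← hMherm]
      _ = (U * Uᴴ) * (W * (A * Aᴴ)) := by rw [hM]; try noncomm_ring
      _ = W * A * Aᴴ := by rw [hU2]; try noncomm_ring
  · intro heq S hS
    rw [hderiv S hS]
    have hMherm : Mᴴ = M := by
      rw [hM]
      have e : (Uᴴ * (W * (A * Aᴴ)))ᴴ = A * Aᴴ * Wᴴ * U := by
        simp only [Matrix.conjTranspose_mul, conjTranspose_conjTranspose]
        try noncomm_ring
      rw [e]
      calc A * Aᴴ * Wᴴ * U = (Uᴴ * U) * (A * Aᴴ * Wᴴ * U) := by rw [hU1]; noncomm_ring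
        _ = Uᴴ * (U * A * Aᴴ * Wᴴ * U) := by noncomm_ring
        _ = Uᴴ * (W * A * Aᴴ) := by rw [heq]
        _ = Uᴴ * (W * (A * Aᴴ)) := by noncomm_ring
    have hstar : star (Matrix.trace (S * M)) = -(Matrix.trace (S * M)) := by
      rw [← Matrix.trace_conjTranspose, Matrix.conjTranspose_mul, hMherm, hS,
        Matrix.mul_neg, Matrix.trace_neg, Matrix.trace_mul_comm]
    have hre : (Matrix.trace (S * M)).re = 0 := by
      have h2 := congrArg Complex.re hstar
      simp only [Complex.star_def, Complex.conj_re, Complex.neg_re] at h2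
      linarith
    rw [hre]
    ring
end

section
/- With J_F(U) = ‖(U−W)A‖² = 2‖A‖² − 2 Re Tr(AA†W†U), if U is a critical point of J_F of the form U = W D (Γ̂ΛΓ̂† ⊕ X̃₀) D† where D diagonalizes AA† = D Ω² D†, Λ = ⊕ᵢ (−I_{νᵢ} ⊕ I_{nᵢ−νᵢ}) over the κ distinct nonzero eigenvalues ω̃ᵢ² of AA† with multiplicities nᵢ, then the critical value is J_F(U) = 4 Σ_{i=1}^κ νᵢ ω̃ᵢ². -/
open Matrix Finset

theorem stmt7 (N κ : ℕ) (A W D : Matrix (Fin N) (Fin N) ℂ)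
    (hW : W ∈ Matrix.unitaryGroup (Fin N) ℂ)
    (hD : D ∈ Matrix.unitaryGroup (Fin N) ℂ)
    -- ω2 is the diagonal of Ω², i.e. AA† = D Ω² D†
    (ω2 : Fin N → ℝ)
    (hAA : A * Aᴴ = D * Matrix.diagonal (fun j => (ω2 j : ℂ)) * Dᴴ)
    -- the distinct nonzero eigenvalues ωt₁² > ⋯ > ωt_κ² > 0 of AA†
    (ωt : Fin κ → ℝ) (hωtpos : ∀ k, 0 < ωt k) (hωtanti : StrictAnti ωt)
    (hvals : ∀ j, ω2 j = 0 ∨ ∃ k, ω2 j = ωt k)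
    -- multiplicities n k and counts ν k of −1's in each block
    (n ν : Fin κ → ℕ)
    (hn : ∀ k, n k = (Finset.univ.filter fun j => ω2 j = ωt k).card)
    (lam : Fin N → ℝ) (hlam : ∀ j, ω2 j ≠ 0 → lam j = 1 ∨ lam j = -1)
    (hν : ∀ k, ν k = (Finset.univ.filter fun j => ω2 j = ωt k ∧ lam j = -1).card)
    -- G = Γ̂ ⊕ I with Γ̂ ∈ U(n₁) ⊕ ⋯ ⊕ U(n_κ): a unitary commuting with Ω²,
    -- equal to the identity on the zero-eigenvalue block
    (G : Matrix (Fin N) (Fin N) ℂ) (hG : G ∈ Matrix.unitaryGroup (Fin N) ℂ)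
    (hGcomm : G * Matrix.diagonal (fun j => (ω2 j : ℂ)) =
      Matrix.diagonal (fun j => (ω2 j : ℂ)) * G)
    (hGzero : ∀ i j, ω2 i = 0 ∨ ω2 j = 0 → G i j = if i = j then 1 else 0)
    -- P = Λ ⊕ X̃₀ with Λ = ⊕ᵢ(−I_{νᵢ} ⊕ I_{nᵢ−νᵢ}) and X̃₀ ∈ U(n₀) arbitrary
    (P : Matrix (Fin N) (Fin N) ℂ) (hP : P ∈ Matrix.unitaryGroup (Fin N) ℂ)
    (hPdiag : ∀ i j, ω2 i ≠ 0 ∨ ω2 j ≠ 0 → P i j = if i = j then (lam i : ℂ) else 0)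
    -- the critical point U = W D (Γ̂ΛΓ̂† ⊕ X̃₀) D†
    (U : Matrix (Fin N) (Fin N) ℂ) (hU : U = W * D * (G * P * Gᴴ) * Dᴴ) :
    JF A W U = 4 * ∑ k, (ν k : ℝ) * ωt k := by
  have hW1 : Wᴴ * W = 1 := Matrix.mem_unitaryGroup_iff'.mp hW
  have hD1 : Dᴴ * D = 1 := Matrix.mem_unitaryGroup_iff'.mp hD
  have hG1 : Gᴴ * G = 1 := Matrix.mem_unitaryGroup_iff'.mp hG
  set dg : Matrix (Fin N) (Fin N) ℂ := Matrix.diagonal (fun j => (ω2 j : ℂ)) with hdg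
  set X : Matrix (Fin N) (Fin N) ℂ := G * P * Gᴴ with hX
  -- U is unitary
  have hUmem : U ∈ Matrix.unitaryGroup (Fin N) ℂ := by
    rw [hU]
    exact mul_mem (mul_mem (mul_mem hW hD)
      (mul_mem (mul_mem hG hP) (Unitary.star_mem hG))) (Unitary.star_mem hD)
  have hUU : Uᴴ * U = 1 := Matrix.mem_unitaryGroup_iff'.mp hUmem
  -- Wᴴ U
  have hWU : Wᴴ * U = D * X * Dᴴ := by
    rw [hU]
    calc Wᴴ * (W * D * X * Dᴴ) = (Wᴴ * W) * (D * X * Dᴴ) := by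
          simp only [Matrix.mul_assoc]
      _ = D * X * Dᴴ := by rw [hW1, one_mul, Matrix.mul_assoc]
  -- dg is hermitian
  have hdgH : dgᴴ = dg := by
    have hsf : (star fun j : Fin N => ((ω2 j : ℂ))) = fun j : Fin N => ((ω2 j : ℂ)) := by
      funext j
      exact Complex.conj_ofReal _
    rw [hdg, Matrix.diagonal_conjTranspose, hsf]
  have hGcomm' : Gᴴ * dg = dg * Gᴴ := by
    have := congrArg Matrix.conjTranspose hGcomm
    simpa [Matrix.conjTranspose_mul, hdgH] using this.symm
  -- trace conjugation invariance
  have tconj : ∀ (Q Y : Matrix (Fin N) (Fin N) ℂ), Qᴴ * Q = 1 →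
      Matrix.trace (Q * Y * Qᴴ) = Matrix.trace Y := by
    intro Q Y h
    rw [Matrix.trace_mul_comm, ← Matrix.mul_assoc, h, one_mul]
  -- trace (P * dg)
  have htP : Matrix.trace (P * dg) = ((∑ j, lam j * ω2 j : ℝ) : ℂ) := by
    have h1 : Matrix.trace (P * dg) = ∑ j, P j j * (ω2 j : ℂ) := by
      simp [Matrix.trace, Matrix.diag, Matrix.mul_apply, hdg, Matrix.diagonal,
        Finset.sum_ite_eq, Matrix.of_apply]
    rw [h1]
    push_cast
    refine Finset.sum_congr rfl fun j _ => ?_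
    by_cases hj : ω2 j = 0
    · simp [hj]
    · rw [hPdiag j j (Or.inl hj)]
      simp
  -- the key trace
  have m1 : D * X * Dᴴ * (D * dg * Dᴴ) = D * (X * dg) * Dᴴ := by
    simp only [Matrix.mul_assoc]
    rw [← Matrix.mul_assoc Dᴴ D (dg * Dᴴ), hD1, one_mul]
  have m2 : X * dg = G * (P * dg) * Gᴴ := by
    rw [hX]
    simp only [Matrix.mul_assoc]
    rw [hGcomm']
  have ht : Matrix.trace (Wᴴ * U * (A * Aᴴ)) = ((∑ j, lam j * ω2 j : ℝ) : ℂ) := by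
    rw [hWU, hAA, m1, tconj D _ hD1, m2, tconj G _ hG1, htP]
  -- trace M
  have htM : Matrix.trace (A * Aᴴ) = ((∑ j, ω2 j : ℝ) : ℂ) := by
    rw [hAA, tconj D _ hD1, hdg, Matrix.trace_diagonal]
    push_cast
    rfl
  -- hermitian M
  have hMH : (A * Aᴴ)ᴴ = A * Aᴴ := by
    rw [Matrix.conjTranspose_mul, Matrix.conjTranspose_conjTranspose]
  -- the other cross term
  have ht' : Matrix.trace (Uᴴ * W * (A * Aᴴ)) = ((∑ j, lam j * ω2 j : ℝ) : ℂ) := by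
    have e : (Wᴴ * U * (A * Aᴴ))ᴴ = (A * Aᴴ) * (Uᴴ * W) := by
      simp [Matrix.conjTranspose_mul, hMH, Matrix.mul_assoc]
    calc Matrix.trace (Uᴴ * W * (A * Aᴴ))
        = Matrix.trace ((A * Aᴴ) * (Uᴴ * W)) := Matrix.trace_mul_comm _ _
      _ = Matrix.trace ((Wᴴ * U * (A * Aᴴ))ᴴ) := by rw [e]
      _ = star (Matrix.trace (Wᴴ * U * (A * Aᴴ))) := Matrix.trace_conjTranspose _
      _ = ((∑ j, lam j * ω2 j : ℝ) : ℂ) := by rw [ht]; exact Complex.conj_ofReal _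
  -- expand the quadratic form
  have hQ : (U - W)ᴴ * (U - W) = 1 + 1 - Uᴴ * W - Wᴴ * U := by
    rw [Matrix.conjTranspose_sub, sub_mul, mul_sub, mul_sub, hUU, hW1]
    abel
  have hTr : Matrix.trace (((U - W) * A)ᴴ * ((U - W) * A))
      = ((2 * ∑ j, ω2 j - 2 * ∑ j, lam j * ω2 j : ℝ) : ℂ) := by
    have e : ((U - W) * A)ᴴ * ((U - W) * A) = Aᴴ * ((U - W)ᴴ * (U - W) * A) := by
      simp only [Matrix.conjTranspose_mul, Matrix.mul_assoc]
    rw [e, Matrix.trace_mul_comm, Matrix.mul_assoc ((U - W)ᴴ * (U - W)) A Aᴴ, hQ]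
    rw [sub_mul, sub_mul, add_mul, one_mul, Matrix.trace_sub, Matrix.trace_sub,
      Matrix.trace_add, htM, ht, ht']
    push_cast
    ring
  rw [JF, hTr, Complex.ofReal_re]
  -- now a real computation
  have key : ∀ j, 2 * ω2 j - 2 * (lam j * ω2 j)
      = ∑ k, (if ω2 j = ωt k ∧ lam j = -1 then 4 * ωt k else 0) := by
    intro j
    rcases hvals j with h0 | ⟨k0, hk0⟩
    · have hz : ∀ k ∈ (Finset.univ : Finset (Fin κ)),
          (if ω2 j = ωt k ∧ lam j = -1 then 4 * ωt k else 0) = 0 := by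
        intro k _
        rw [if_neg]
        rintro ⟨hk, -⟩
        have : ωt k = 0 := by rw [← hk, h0]
        exact (hωtpos k).ne' this
      rw [Finset.sum_eq_zero hz, h0]
      ring
    · have hjne : ω2 j ≠ 0 := by rw [hk0]; exact (hωtpos k0).ne'
      rcases hlam j hjne with h1 | h1
      · rw [h1, Finset.sum_eq_zero]
        · ring
        intro k _
        rw [if_neg]
        rintro ⟨-, hk⟩
        norm_num at hk
      · rw [h1, Finset.sum_eq_single k0]
        · rw [if_pos ⟨hk0, rfl⟩, hk0]
          ring
        · intro k _ hkk
          rw [if_neg]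
          rintro ⟨hk, -⟩
          have : ωt k = ωt k0 := by rw [← hk, hk0]
          exact hkk (hωtanti.injective this)
        · intro h
          exact absurd (Finset.mem_univ k0) h
  calc 2 * ∑ j, ω2 j - 2 * ∑ j, lam j * ω2 j
      = ∑ j, (2 * ω2 j - 2 * (lam j * ω2 j)) := by
        rw [Finset.sum_sub_distrib, Finset.mul_sum, Finset.mul_sum]
    _ = ∑ j, ∑ k, (if ω2 j = ωt k ∧ lam j = -1 then 4 * ωt k else 0) :=
        Finset.sum_congr rfl fun j _ => key j
    _ = ∑ k, ∑ j, (if ω2 j = ωt k ∧ lam j = -1 then 4 * ωt k else 0) := Finset.sum_comm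
    _ = ∑ k, ((Finset.univ.filter fun j => ω2 j = ωt k ∧ lam j = -1).card : ℝ) * (4 * ωt k) := by
        refine Finset.sum_congr rfl fun k _ => ?_
        rw [← Finset.sum_filter, Finset.sum_const, nsmul_eq_mul]
    _ = 4 * ∑ k, (ν k : ℝ) * ωt k := by
        rw [Finset.mul_sum]
        refine Finset.sum_congr rfl fun k _ => ?_
        rw [hν k]
        push_cast
        ring
end

section
/- Let A ∈ ℂ^{N×N}, W ∈ U(N), and define B : u(N) → u(N) by B(Ω) = AΩA†. Then for every U ∈ U(N), ‖(Ad(U) − Ad(W)) ∘ B‖²_{HS} = 2‖A‖⁴ − 2|Tr(AA†W†U)|², where ‖·‖_{HS} is the Hilbert–Schmidt norm of operators on u(N) and ‖A‖ the Frobenius norm of A. -/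
open Matrix Finset

noncomputable def zc {N : ℕ} (a b : Fin N) : ℂ :=
  if a < b then ((Real.sqrt 2 : ℂ))⁻¹ else if b < a then Complex.I * ((Real.sqrt 2 : ℂ))⁻¹ else Complex.I / 2

noncomputable def KM {N : ℕ} (m : Fin N × Fin N) : Matrix (Fin N) (Fin N) ℂ :=
  Matrix.of fun p q => zc m.1 m.2 * ((if m.1 = p then 1 else 0) * (if m.2 = q then 1 else 0))
    - (starRingEnd ℂ) (zc m.1 m.2) * ((if m.2 = p then 1 else 0) * (if m.1 = q then 1 else 0))

lemma s2 : ((Real.sqrt 2 : ℂ))⁻¹ ^ 2 = 1/2 := by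
  rw [inv_pow, ← Complex.ofReal_pow, Real.sq_sqrt (by norm_num : (2:ℝ) ≥ 0)]
  norm_num

lemma conj_inv_s2 : (starRingEnd ℂ) ((Real.sqrt 2 : ℂ))⁻¹ = ((Real.sqrt 2 : ℂ))⁻¹ := by
  rw [map_inv₀, Complex.conj_ofReal]

lemma zA {N : ℕ} (a b : Fin N) (h : a ≠ b) :
    zc a b ^ 2 + ((starRingEnd ℂ) (zc b a)) ^ 2 = 0 := by
  rcases lt_or_gt_of_ne h with hlt | hgt
  · simp only [zc, if_pos hlt, if_neg hlt.not_gt, if_neg (lt_irrefl b), _root_.map_mul,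
      Complex.conj_I, conj_inv_s2]
    ring_nf
    rw [Complex.I_sq]; ring
  · simp only [zc, if_pos hgt, if_neg hgt.not_gt, if_neg (lt_irrefl a), _root_.map_mul,
      Complex.conj_I, conj_inv_s2]
    ring_nf
    rw [Complex.I_sq]; ring

lemma zB {N : ℕ} (a b : Fin N) (h : a ≠ b) :
    zc a b * (starRingEnd ℂ) (zc a b) + zc b a * (starRingEnd ℂ) (zc b a) = 1 := by
  rcases lt_or_gt_of_ne h with hlt | hgt
  · simp only [zc, if_pos hlt, if_neg hlt.not_gt, if_neg (lt_irrefl b), _root_.map_mul,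
      Complex.conj_I, conj_inv_s2]
    ring_nf
    rw [Complex.I_sq]
    linear_combination 2 * s2
  · simp only [zc, if_pos hgt, if_neg hgt.not_gt, if_neg (lt_irrefl a), _root_.map_mul,
      Complex.conj_I, conj_inv_s2]
    ring_nf
    rw [Complex.I_sq]
    linear_combination 2 * s2

lemma zC {N : ℕ} (a b : Fin N) (h : a ≠ b) :
    zc a b * (starRingEnd ℂ) (zc a b) = 1/2 := by
  rcases lt_or_gt_of_ne h with hlt | hgt
  · simp only [zc, if_pos hlt, if_neg hlt.not_gt, conj_inv_s2]
    linear_combination s2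
  · simp only [zc, if_neg hgt.not_gt, if_pos hgt, _root_.map_mul, Complex.conj_I, conj_inv_s2]
    ring_nf
    rw [Complex.I_sq]
    linear_combination s2

lemma zD {N : ℕ} (a b : Fin N) (h : a ≠ b) :
    zc a b * zc b a + (starRingEnd ℂ) (zc a b) * (starRingEnd ℂ) (zc b a) = 0 := by
  rcases lt_or_gt_of_ne h with hlt | hgt
  · simp only [zc, if_pos hlt, if_neg hlt.not_gt, if_neg (lt_irrefl b), _root_.map_mul,
      Complex.conj_I, conj_inv_s2]
    ring
  · simp only [zc, if_pos hgt, if_neg hgt.not_gt, if_neg (lt_irrefl a), _root_.map_mul,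
      Complex.conj_I, conj_inv_s2]
    ring

lemma zE {N : ℕ} (a b : Fin N) (h : a ≠ b) :
    ((starRingEnd ℂ) (zc a b)) ^ 2 + zc b a ^ 2 = 0 := by
  rcases lt_or_gt_of_ne h with hlt | hgt
  · simp only [zc, if_pos hlt, if_neg hlt.not_gt, if_neg (lt_irrefl b), _root_.map_mul,
      Complex.conj_I, conj_inv_s2]
    ring_nf
    rw [Complex.I_sq]; ring
  · simp only [zc, if_pos hgt, if_neg hgt.not_gt, if_neg (lt_irrefl a), _root_.map_mul,
      Complex.conj_I, conj_inv_s2]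
    ring_nf
    rw [Complex.I_sq]; ring

lemma zdiag {N : ℕ} (a : Fin N) : zc a a = Complex.I / 2 := by
  simp [zc]

lemma KM_zero {N : ℕ} {a b p q : Fin N} (h1 : ¬(a = p ∧ b = q)) (h2 : ¬(b = p ∧ a = q)) :
    KM (a,b) p q = 0 := by
  have e1 : (if a = p then (1:ℂ) else 0) * (if b = q then 1 else 0) = 0 := by
    by_cases h : a = p <;> by_cases h' : b = q <;> simp_all
  have e2 : (if b = p then (1:ℂ) else 0) * (if a = q then 1 else 0) = 0 := by
    by_cases h : b = p <;> by_cases h' : a = q <;> simp_all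
  simp only [KM, Matrix.of_apply, e1, e2, mul_zero, sub_zero]

lemma conj_half_I : (starRingEnd ℂ) (Complex.I/2) = -(Complex.I/2) := by
  rw [div_eq_mul_inv, _root_.map_mul, Complex.conj_I, map_inv₀, map_ofNat]
  ring

lemma lemA {N : ℕ} (p q r s : Fin N) :
    ∑ m : Fin N × Fin N, KM m p q * KM m r s
      = -((if p = s then (1:ℂ) else 0) * (if q = r then 1 else 0)) := by
  by_cases hpq : p = q
  · subst hpq
    rw [← Finset.sum_subset (Finset.subset_univ {((p,p) : Fin N × Fin N)})
        (fun x _ hx => by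
          obtain ⟨a, b⟩ := x
          have hne : ¬(a = p ∧ b = p) := by
            intro ⟨h1, h2⟩; exact hx (by simp [h1, h2])
          rw [KM_zero hne (fun ⟨h1,h2⟩ => hne ⟨h2,h1⟩), zero_mul]),
      Finset.sum_singleton]
    simp only [KM, Matrix.of_apply, eq_self_iff_true, if_true, zdiag, conj_half_I, mul_one, one_mul]
    linear_combination ((if p = r then (1:ℂ) else 0) * (if p = s then 1 else 0)) * Complex.I_sq
  · have hqp : q ≠ p := Ne.symm hpq
    have hne : ((p,q) : Fin N × Fin N) ≠ (q,p) := by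
      simp [Prod.ext_iff]; intro h; exact absurd h hpq
    rw [← Finset.sum_subset (Finset.subset_univ {((p,q) : Fin N × Fin N), (q,p)})
        (fun x _ hx => by
          obtain ⟨a, b⟩ := x
          simp only [Finset.mem_insert, Finset.mem_singleton, Prod.mk.injEq, not_or,
            not_and] at hx
          rw [KM_zero (fun ⟨h1,h2⟩ => hx.1 h1 h2) (fun ⟨h1,h2⟩ => hx.2 h2 h1), zero_mul]),
      Finset.sum_pair hne]
    simp only [KM, Matrix.of_apply, eq_self_iff_true, if_true, if_neg hpq, if_neg hqp, mul_one,
      mul_zero, zero_mul, one_mul, sub_zero, zero_sub]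
    linear_combination ((if p = r then (1:ℂ) else 0) * (if q = s then 1 else 0)) * zA p q hpq
      - ((if q = r then (1:ℂ) else 0) * (if p = s then 1 else 0)) * zB p q hpq

lemma lemA' {N : ℕ} (p q r s : Fin N) :
    ∑ m : Fin N × Fin N, (starRingEnd ℂ) (KM m p q) * KM m r s
      = (if p = r then (1:ℂ) else 0) * (if q = s then 1 else 0) := by
  by_cases hpq : p = q
  · subst hpq
    rw [← Finset.sum_subset (Finset.subset_univ {((p,p) : Fin N × Fin N)})
        (fun x _ hx => by
          obtain ⟨a, b⟩ := x
          have hne : ¬(a = p ∧ b = p) := by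
            intro ⟨h1, h2⟩; exact hx (by simp [h1, h2])
          rw [KM_zero hne (fun ⟨h1,h2⟩ => hne ⟨h2,h1⟩), map_zero, zero_mul]),
      Finset.sum_singleton]
    simp only [KM, Matrix.of_apply, eq_self_iff_true, if_true, zdiag, conj_half_I, mul_one,
      one_mul, map_sub, _root_.map_mul, map_neg, Complex.conj_conj]
    linear_combination (-((if p = r then (1:ℂ) else 0) * (if p = s then 1 else 0))) * Complex.I_sq
  · have hqp : q ≠ p := Ne.symm hpq
    have hne : ((p,q) : Fin N × Fin N) ≠ (q,p) := by
      simp [Prod.ext_iff]; intro h; exact absurd h hpq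
    rw [← Finset.sum_subset (Finset.subset_univ {((p,q) : Fin N × Fin N), (q,p)})
        (fun x _ hx => by
          obtain ⟨a, b⟩ := x
          simp only [Finset.mem_insert, Finset.mem_singleton, Prod.mk.injEq, not_or,
            not_and] at hx
          rw [KM_zero (fun ⟨h1,h2⟩ => hx.1 h1 h2) (fun ⟨h1,h2⟩ => hx.2 h2 h1), map_zero,
            zero_mul]),
      Finset.sum_pair hne]
    simp only [KM, Matrix.of_apply, eq_self_iff_true, if_true, if_neg hpq, if_neg hqp, mul_one,
      mul_zero, zero_mul, one_mul, sub_zero, zero_sub, map_sub, _root_.map_mul, map_neg,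
      Complex.conj_conj, map_zero]
    linear_combination ((if p = r then (1:ℂ) else 0) * (if q = s then 1 else 0))
        * (zC p q hpq + zC q p hqp)
      - ((if q = r then (1:ℂ) else 0) * (if p = s then 1 else 0)) * zE p q hpq

lemma lemG {N : ℕ} (a b c d : Fin N) :
    ∑ m : Fin N × Fin N, (starRingEnd ℂ) (KM (a,b) m.1 m.2) * KM (c,d) m.1 m.2
      = (if c = a then (1:ℂ) else 0) * (if d = b then 1 else 0) := by
  by_cases hab : a = b
  · subst hab
    rw [← Finset.sum_subset (Finset.subset_univ {((a,a) : Fin N × Fin N)})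
        (fun x _ hx => by
          obtain ⟨p, q⟩ := x
          have hne : ¬(a = p ∧ a = q) := by
            intro ⟨h1, h2⟩; exact hx (by simp [← h1, ← h2])
          rw [KM_zero hne hne, map_zero, zero_mul]),
      Finset.sum_singleton]
    simp only [KM, Matrix.of_apply, eq_self_iff_true, if_true, zdiag, conj_half_I, mul_one,
      one_mul, map_sub, _root_.map_mul, map_neg, Complex.conj_conj]
    by_cases hc : c = a
    · by_cases hd : d = a
      · simp only [hc, hd, eq_self_iff_true, if_true, zdiag, conj_half_I, mul_one, one_mul]
        linear_combination (-1 : ℂ) * Complex.I_sq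
      · simp [hc, hd]
    · simp [hc]
  · have hba : b ≠ a := Ne.symm hab
    have hne : ((a,b) : Fin N × Fin N) ≠ (b,a) := by
      simp [Prod.ext_iff]; intro h; exact absurd h hab
    rw [← Finset.sum_subset (Finset.subset_univ {((a,b) : Fin N × Fin N), (b,a)})
        (fun x _ hx => by
          obtain ⟨p, q⟩ := x
          simp only [Finset.mem_insert, Finset.mem_singleton, Prod.mk.injEq, not_or,
            not_and] at hx
          have h1 : ¬(a = p ∧ b = q) := fun ⟨u,v⟩ => hx.1 u.symm v.symm
          have h2 : ¬(b = p ∧ a = q) := fun ⟨u,v⟩ => hx.2 u.symm v.symm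
          rw [KM_zero h1 h2, map_zero, zero_mul]),
      Finset.sum_pair hne]
    simp only [KM, Matrix.of_apply, eq_self_iff_true, if_true, if_neg hab, if_neg hba, mul_one,
      mul_zero, zero_mul, one_mul, sub_zero, zero_sub, map_sub, _root_.map_mul, map_neg,
      Complex.conj_conj, map_zero]
    by_cases hc1 : c = a
    · by_cases hd1 : d = b
      · simp only [hc1, hd1, eq_self_iff_true, if_true, if_neg hab, if_neg hba, mul_one,
          mul_zero, one_mul, zero_mul, sub_zero, zero_sub]
        linear_combination 2 * zC a b hab
      · simp [hc1, hd1, hab]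
    · by_cases hc2 : c = b
      · by_cases hd2 : d = a
        · simp only [hc2, hd2, hc1, eq_self_iff_true, if_true, if_neg hab, if_neg hba,
            if_neg hc1, mul_one, mul_zero, one_mul, zero_mul, sub_zero, zero_sub, zero_mul]
          linear_combination -(zD a b hab)
        · simp [hc2, hd2, hab, hba, hc1]
      · simp [hc1, hc2]

lemma hexp {N : ℕ} (X : Matrix (Fin N) (Fin N) ℂ) (hX : Xᴴ = -X) (p q : Fin N) :
    X p q = ∑ m : Fin N × Fin N, (((Matrix.trace ((KM m)ᴴ * X)).re : ℝ) : ℂ) * KM m p q := by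
  symm
  have hXc : ∀ i k : Fin N, (starRingEnd ℂ) (X k i) = -(X i k) := by
    intro i k
    have := congrFun (congrFun hX i) k
    simpa [Matrix.conjTranspose_apply] using this
  have htr : ∀ m : Fin N × Fin N, Matrix.trace ((KM m)ᴴ * X)
      = ∑ i, ∑ k, (starRingEnd ℂ) (KM m k i) * X k i := by
    intro m
    simp [Matrix.trace, Matrix.mul_apply, Matrix.conjTranspose_apply, Matrix.diag]
  have hre : ∀ w : ℂ, ((w.re : ℝ) : ℂ) = (w + (starRingEnd ℂ) w) / 2 := by
    intro w
    rw [Complex.add_conj]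
    push_cast
    ring
  calc ∑ m : Fin N × Fin N, (((Matrix.trace ((KM m)ᴴ * X)).re : ℝ) : ℂ) * KM m p q
      = ∑ m : Fin N × Fin N, ∑ i, ∑ k,
          (X k i * ((starRingEnd ℂ) (KM m k i) * KM m p q)
            - X i k * (KM m k i * KM m p q)) / 2 := by
        refine Finset.sum_congr rfl fun m _ => ?_
        rw [hre, htr]
        rw [map_sum]
        simp only [map_sum, _root_.map_mul, Complex.conj_conj, hXc]
        rw [div_mul_eq_mul_div, add_mul, Finset.sum_mul, Finset.sum_mul, ← Finset.sum_add_distrib,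
          Finset.sum_div]
        refine Finset.sum_congr rfl fun i _ => ?_
        rw [Finset.sum_mul, Finset.sum_mul, ← Finset.sum_add_distrib, ← Finset.sum_div]
        refine congrArg (· / 2) (Finset.sum_congr rfl fun k _ => ?_)
        ring
    _ = ∑ i, ∑ k, (X k i * (∑ m : Fin N × Fin N, (starRingEnd ℂ) (KM m k i) * KM m p q)
            - X i k * (∑ m : Fin N × Fin N, KM m k i * KM m p q)) / 2 := by
        rw [Finset.sum_comm]
        refine Finset.sum_congr rfl fun i _ => ?_
        rw [Finset.sum_comm]
        refine Finset.sum_congr rfl fun k _ => ?_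
        rw [← Finset.sum_div, Finset.mul_sum, Finset.mul_sum, ← Finset.sum_sub_distrib]
    _ = X p q := by
        simp only [lemA, lemA']
        rw [Finset.sum_comm]
        simp only [mul_ite, mul_one, mul_zero, ite_mul, zero_mul, mul_neg, sub_neg_eq_add]
        have step : ∀ x : Fin N, ∑ x_1 : Fin N,
            ((if x_1 = q then if x = p then X x x_1 else 0 else 0)
              + if x_1 = p then if x = q then X x_1 x else 0 else 0) / 2
            = ((if x = p then X x q else 0) + (if x = q then X p x else 0)) / 2 := by
          intro x
          rw [← Finset.sum_div, Finset.sum_add_distrib,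
            Finset.sum_ite_eq' Finset.univ q (fun x_1 => if x = p then X x x_1 else 0),
            Finset.sum_ite_eq' Finset.univ p (fun x_1 => if x = q then X x_1 x else 0)]
          simp
        simp only [step]
        rw [← Finset.sum_div, Finset.sum_add_distrib,
          Finset.sum_ite_eq' Finset.univ p (fun x => X x q),
          Finset.sum_ite_eq' Finset.univ q (fun x => X p x)]
        simp

lemma lemT {N : ℕ} {ι : Type} [Fintype ι] [DecidableEq ι] (hcard : Fintype.card ι = N ^ 2)
    (Ω : ι → Matrix (Fin N) (Fin N) ℂ)
    (hskew : ∀ j, (Ω j)ᴴ = -(Ω j))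
    (horth : ∀ i j, ((Matrix.trace ((Ω i)ᴴ * Ω j)).re) = if i = j then 1 else 0)
    (p q r s : Fin N) :
    ∑ j, Ω j p q * Ω j r s
      = -((if p = s then (1:ℂ) else 0) * (if q = r then 1 else 0)) := by
  classical
  set O : ι → Fin N × Fin N → ℝ := fun j m => (Matrix.trace ((KM m)ᴴ * Ω j)).re with hOdef
  have hexpand : ∀ j (a b : Fin N), Ω j a b = ∑ m : Fin N × Fin N, ((O j m : ℝ) : ℂ) * KM m a b :=
    fun j => hexp (Ω j) (hskew j)
  -- Gram identity
  have hgram : ∀ i j, ∑ m : Fin N × Fin N, O i m * O j m = if i = j then (1:ℝ) else 0 := by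
    intro i j
    have h1 : Matrix.trace ((Ω i)ᴴ * Ω j)
        = ((∑ m : Fin N × Fin N, O i m * O j m : ℝ) : ℂ) := by
      have htr : Matrix.trace ((Ω i)ᴴ * Ω j)
          = ∑ mp : Fin N × Fin N, (starRingEnd ℂ) (Ω i mp.1 mp.2) * Ω j mp.1 mp.2 := by
        rw [Fintype.sum_prod_type]
        simp [Matrix.trace, Matrix.mul_apply, Matrix.conjTranspose_apply, Matrix.diag]
        rw [Finset.sum_comm]
      rw [htr]
      have hsub : ∀ mp : Fin N × Fin N, (starRingEnd ℂ) (Ω i mp.1 mp.2) * Ω j mp.1 mp.2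
          = ∑ m : Fin N × Fin N, ∑ m' : Fin N × Fin N,
              ((O i m : ℝ) : ℂ) * ((O j m' : ℝ) : ℂ) *
                ((starRingEnd ℂ) (KM m mp.1 mp.2) * KM m' mp.1 mp.2) := by
        intro mp
        rw [hexpand i mp.1 mp.2, hexpand j mp.1 mp.2, map_sum, Finset.sum_mul_sum]
        refine Finset.sum_congr rfl fun m _ => Finset.sum_congr rfl fun m' _ => ?_
        rw [_root_.map_mul, Complex.conj_ofReal]
        ring
      rw [Finset.sum_congr rfl fun mp _ => hsub mp]
      rw [Finset.sum_comm]
      have h2 : ∀ m : Fin N × Fin N,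
          ∑ mp : Fin N × Fin N, ∑ m' : Fin N × Fin N,
            ((O i m : ℝ) : ℂ) * ((O j m' : ℝ) : ℂ) *
              ((starRingEnd ℂ) (KM m mp.1 mp.2) * KM m' mp.1 mp.2)
          = ((O i m : ℝ) : ℂ) * ((O j m : ℝ) : ℂ) := by
        intro m
        rw [Finset.sum_comm]
        have h3 : ∀ m' : Fin N × Fin N,
            ∑ mp : Fin N × Fin N,
              ((O i m : ℝ) : ℂ) * ((O j m' : ℝ) : ℂ) *
                ((starRingEnd ℂ) (KM m mp.1 mp.2) * KM m' mp.1 mp.2)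
            = ((O i m : ℝ) : ℂ) * ((O j m' : ℝ) : ℂ) *
                (if m' = m then (1:ℂ) else 0) := by
          intro m'
          rw [← Finset.mul_sum]
          congr 1
          rw [show (KM m : Matrix (Fin N) (Fin N) ℂ) = KM (m.1, m.2) by rw [Prod.mk.eta],
            show (KM m' : Matrix (Fin N) (Fin N) ℂ) = KM (m'.1, m'.2) by rw [Prod.mk.eta]]
          rw [lemG m.1 m.2 m'.1 m'.2]
          by_cases h : m' = m
          · simp [h]
          · rw [if_neg h]
            rcases (not_and_or.mp (fun hc => h (Prod.ext hc.1 hc.2))) with hc | hc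
            · rw [if_neg hc, zero_mul]
            · rw [if_neg hc, mul_zero]
        rw [Finset.sum_congr rfl fun m' _ => h3 m']
        simp [mul_ite, mul_one, mul_zero]
      rw [Finset.sum_congr rfl fun m _ => h2 m]
      push_cast
      rfl
    have := horth i j
    rw [h1] at this
    rw [Complex.ofReal_re] at this
    exact this
  -- transpose orthogonality
  have hcards : Fintype.card ι = Fintype.card (Fin N × Fin N) := by
    simp [hcard, sq]
  let e : ι ≃ Fin N × Fin N := Fintype.equivOfCardEq hcards
  set P : Matrix ι ι ℝ := Matrix.of fun i j => O i (e j) with hPdef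
  have hP : P * Pᵀ = 1 := by
    ext i j
    rw [Matrix.mul_apply]
    simp only [hPdef, Matrix.transpose_apply, Matrix.of_apply]
    rw [show (∑ k, O i (e k) * O j (e k)) = ∑ m : Fin N × Fin N, O i m * O j m from
      Equiv.sum_comp e (fun m => O i m * O j m)]
    rw [hgram i j, Matrix.one_apply]
  have hP2 : Pᵀ * P = 1 := mul_eq_one_comm.mp hP
  have hcol : ∀ m m' : Fin N × Fin N, ∑ j, O j m * O j m' = if m = m' then (1:ℝ) else 0 := by
    intro m m'
    have h4 := congrFun (congrFun hP2 (e.symm m)) (e.symm m')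
    rw [Matrix.mul_apply] at h4
    simp only [hPdef, Matrix.transpose_apply, Matrix.of_apply, Equiv.apply_symm_apply,
      Matrix.one_apply, EmbeddingLike.apply_eq_iff_eq] at h4
    exact h4
  -- final computation
  have hstep : ∀ j, Ω j p q * Ω j r s
      = ∑ m : Fin N × Fin N, ∑ m' : Fin N × Fin N,
          (((O j m : ℝ) : ℂ) * ((O j m' : ℝ) : ℂ)) * (KM m p q * KM m' r s) := by
    intro j
    rw [hexpand j p q, hexpand j r s, Finset.sum_mul_sum]
    exact Finset.sum_congr rfl fun m _ => Finset.sum_congr rfl fun m' _ => by ring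
  rw [Finset.sum_congr rfl fun j _ => hstep j]
  rw [Finset.sum_comm]
  have hinner : ∀ m : Fin N × Fin N,
      ∑ j, ∑ m' : Fin N × Fin N,
          (((O j m : ℝ) : ℂ) * ((O j m' : ℝ) : ℂ)) * (KM m p q * KM m' r s)
      = KM m p q * KM m r s := by
    intro m
    rw [Finset.sum_comm]
    have h5 : ∀ m' : Fin N × Fin N,
        ∑ j, (((O j m : ℝ) : ℂ) * ((O j m' : ℝ) : ℂ)) * (KM m p q * KM m' r s)
        = (if m = m' then (1:ℂ) else 0) * (KM m p q * KM m' r s) := by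
      intro m'
      rw [← Finset.sum_mul]
      congr 1
      rw [show (∑ j, ((O j m : ℝ) : ℂ) * ((O j m' : ℝ) : ℂ))
          = (((∑ j, O j m * O j m' : ℝ)) : ℂ) by push_cast; rfl]
      rw [hcol m m']
      by_cases h : m = m' <;> simp [h]
    rw [Finset.sum_congr rfl fun m' _ => h5 m']
    simp [ite_mul, zero_mul]
  rw [Finset.sum_congr rfl fun m _ => hinner m]
  exact lemA p q r s

lemma lemL {N : ℕ} {ι : Type} [Fintype ι] [DecidableEq ι] (hcard : Fintype.card ι = N ^ 2)
    (Ω : ι → Matrix (Fin N) (Fin N) ℂ)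
    (hskew : ∀ j, (Ω j)ᴴ = -(Ω j))
    (horth : ∀ i j, ((Matrix.trace ((Ω i)ᴴ * Ω j)).re) = if i = j then 1 else 0)
    (P Q : Matrix (Fin N) (Fin N) ℂ) :
    ∑ j, Matrix.trace (Ω j * P * Ω j * Q) = -(Matrix.trace P * Matrix.trace Q) := by
  classical
  have h1 : ∀ j, Matrix.trace (Ω j * P * Ω j * Q)
      = ∑ a, ∑ d, ∑ c, ∑ b, (Ω j a b * Ω j c d) * (P b c * Q d a) := by
    intro j
    rw [Matrix.trace]
    simp only [Matrix.diag_apply, Matrix.mul_apply]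
    refine Finset.sum_congr rfl fun a _ => ?_
    refine Finset.sum_congr rfl fun d _ => ?_
    rw [Finset.sum_mul]
    refine Finset.sum_congr rfl fun c _ => ?_
    rw [Finset.sum_mul, Finset.sum_mul]
    exact Finset.sum_congr rfl fun b _ => by ring
  rw [Finset.sum_congr rfl fun j _ => h1 j]
  rw [Finset.sum_comm]
  have h2 : ∀ a, ∑ j, ∑ d, ∑ c, ∑ b, (Ω j a b * Ω j c d) * (P b c * Q d a)
      = ∑ d, ∑ c, ∑ b, (∑ j, Ω j a b * Ω j c d) * (P b c * Q d a) := by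
    intro a
    rw [Finset.sum_comm]
    refine Finset.sum_congr rfl fun d _ => ?_
    rw [Finset.sum_comm]
    refine Finset.sum_congr rfl fun c _ => ?_
    rw [Finset.sum_comm]
    refine Finset.sum_congr rfl fun b _ => ?_
    rw [← Finset.sum_mul]
  rw [Finset.sum_congr rfl fun a _ => h2 a]
  have h3 : ∀ a d c b,
      (∑ j, Ω j a b * Ω j c d) * (P b c * Q d a)
      = -(((if a = d then (1:ℂ) else 0) * (if b = c then 1 else 0)) * (P b c * Q d a)) := by
    intro a d c b
    rw [lemT hcard Ω hskew horth a b c d]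
    ring
  simp only [h3]
  simp only [ite_mul, one_mul, zero_mul, mul_ite, mul_zero, mul_one]
  simp only [Finset.sum_neg_distrib]
  rw [neg_inj]
  have c1 : ∀ x : Fin N,
      ∑ x_1 : Fin N, ∑ x_2 : Fin N, ∑ x_3 : Fin N,
        (if x_3 = x_2 then if x = x_1 then P x_3 x_2 * Q x_1 x else 0 else 0)
      = ∑ x_2 : Fin N, P x_2 x_2 * Q x x := by
    intro x
    rw [Finset.sum_comm]
    refine Finset.sum_congr rfl fun x_2 _ => ?_
    have c2 : ∀ x_1 : Fin N,
        ∑ x_3 : Fin N, (if x_3 = x_2 then if x = x_1 then P x_3 x_2 * Q x_1 x else 0 else 0)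
        = if x = x_1 then P x_2 x_2 * Q x_1 x else 0 := by
      intro x_1
      rw [Finset.sum_ite_eq' Finset.univ x_2
        (fun x_3 => if x = x_1 then P x_3 x_2 * Q x_1 x else 0)]
      simp
    rw [Finset.sum_congr rfl fun x_1 _ => c2 x_1]
    rw [Finset.sum_ite_eq Finset.univ x (fun x_1 => P x_2 x_2 * Q x_1 x)]
    simp
  rw [Finset.sum_congr rfl fun x _ => c1 x]
  rw [Finset.sum_comm]
  rw [Matrix.trace, Matrix.trace, Finset.sum_mul_sum]
  rfl

lemma trace_conj_pair {n : ℕ} (V V' B C : Matrix (Fin n) (Fin n) ℂ) :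
    Matrix.trace (V*B*Vᴴ*(V'*C*V'ᴴ)) = Matrix.trace (B*(Vᴴ*V')*C*(V'ᴴ*V)) := by
  rw [show V*B*Vᴴ*(V'*C*V'ᴴ) = V*(B*(Vᴴ*V')*C*V'ᴴ) by simp [Matrix.mul_assoc]]
  rw [Matrix.trace_mul_comm]
  simp [Matrix.mul_assoc]

lemma trace_sandwich {n : ℕ} (A X C D : Matrix (Fin n) (Fin n) ℂ) :
    Matrix.trace ((A*X*Aᴴ)*C*(A*X*Aᴴ)*D) = Matrix.trace (X*(Aᴴ*C*A)*X*(Aᴴ*D*A)) := by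
  rw [show (A*X*Aᴴ)*C*(A*X*Aᴴ)*D = A*(X*(Aᴴ*C*A)*X*(Aᴴ*D)) by simp [Matrix.mul_assoc]]
  rw [Matrix.trace_mul_comm]
  simp [Matrix.mul_assoc]

theorem stmt13 (N : ℕ) (A W U : Matrix (Fin N) (Fin N) ℂ)
    (hW : W ∈ Matrix.unitaryGroup (Fin N) ℂ)
    (hU : U ∈ Matrix.unitaryGroup (Fin N) ℂ)
    -- an orthonormal basis (Ωⱼ) of u(N) for ⟨X,Y⟩ = Re Tr(X†Y):
    -- N² orthonormal skew-Hermitian matrices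
    (ι : Type) [Fintype ι] [DecidableEq ι] (hcard : Fintype.card ι = N ^ 2)
    (Ω : ι → Matrix (Fin N) (Fin N) ℂ)
    (hskew : ∀ j, (Ω j)ᴴ = -(Ω j))
    (horth : ∀ i j, (Matrix.trace ((Ω i)ᴴ * Ω j)).re = if i = j then 1 else 0) :
    -- ‖(Ad(U) − Ad(W)) ∘ B‖²_HS = 2‖A‖⁴ − 2|Tr(AA†W†U)|², where B(Ω) = AΩA†
    (∑ j, (Matrix.trace
        ((U * (A * Ω j * Aᴴ) * Uᴴ - W * (A * Ω j * Aᴴ) * Wᴴ)ᴴ *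
          (U * (A * Ω j * Aᴴ) * Uᴴ - W * (A * Ω j * Aᴴ) * Wᴴ))).re) =
      2 * ((Matrix.trace (Aᴴ * A)).re) ^ 2 -
        2 * ‖Matrix.trace (A * Aᴴ * Wᴴ * U)‖ ^ 2 := by
  classical
  have hU1 : Uᴴ * U = 1 := by
    have := hU.1
    simpa [Matrix.star_eq_conjTranspose] using this
  have hW1 : Wᴴ * W = 1 := by
    have := hW.1
    simpa [Matrix.star_eq_conjTranspose] using this
  have hBH : ∀ j, (A * Ω j * Aᴴ)ᴴ = -(A * Ω j * Aᴴ) := by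
    intro j
    simp [Matrix.conjTranspose_mul, hskew j, Matrix.mul_assoc, Matrix.neg_mul, Matrix.mul_neg]
  have key : ∀ j, Matrix.trace
        ((U * (A * Ω j * Aᴴ) * Uᴴ - W * (A * Ω j * Aᴴ) * Wᴴ)ᴴ *
          (U * (A * Ω j * Aᴴ) * Uᴴ - W * (A * Ω j * Aᴴ) * Wᴴ))
      = -(2 * Matrix.trace (Ω j * (Aᴴ*A) * Ω j * (Aᴴ*A)))
        + Matrix.trace (Ω j * (Aᴴ*(Uᴴ*W)*A) * Ω j * (Aᴴ*(Wᴴ*U)*A))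
        + Matrix.trace (Ω j * (Aᴴ*(Wᴴ*U)*A) * Ω j * (Aᴴ*(Uᴴ*W)*A)) := by
    intro j
    set B := A * Ω j * Aᴴ with hBdef
    have hB : Bᴴ = -B := hBH j
    have hXH : (U * B * Uᴴ - W * B * Wᴴ)ᴴ = -(U * B * Uᴴ - W * B * Wᴴ) := by
      rw [Matrix.conjTranspose_sub]
      rw [show (U * B * Uᴴ)ᴴ = -(U * B * Uᴴ) by
        simp [Matrix.conjTranspose_mul, hB, Matrix.mul_assoc, Matrix.neg_mul, Matrix.mul_neg]]
      rw [show (W * B * Wᴴ)ᴴ = -(W * B * Wᴴ) by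
        simp [Matrix.conjTranspose_mul, hB, Matrix.mul_assoc, Matrix.neg_mul, Matrix.mul_neg]]
      rw [neg_sub_neg, ← neg_sub]
    rw [hXH, Matrix.neg_mul, Matrix.trace_neg]
    rw [Matrix.sub_mul, Matrix.mul_sub, Matrix.mul_sub, Matrix.trace_sub, Matrix.trace_sub,
      Matrix.trace_sub]
    have e11 : Matrix.trace (U*B*Uᴴ*(U*B*Uᴴ)) = Matrix.trace (Ω j * (Aᴴ*A) * Ω j * (Aᴴ*A)) := by
      rw [trace_conj_pair, hU1, hBdef, trace_sandwich]
      simp [Matrix.mul_one, Matrix.one_mul]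
    have e12 : Matrix.trace (U*B*Uᴴ*(W*B*Wᴴ))
        = Matrix.trace (Ω j * (Aᴴ*(Uᴴ*W)*A) * Ω j * (Aᴴ*(Wᴴ*U)*A)) := by
      rw [trace_conj_pair, hBdef, trace_sandwich]
    have e21 : Matrix.trace (W*B*Wᴴ*(U*B*Uᴴ))
        = Matrix.trace (Ω j * (Aᴴ*(Wᴴ*U)*A) * Ω j * (Aᴴ*(Uᴴ*W)*A)) := by
      rw [trace_conj_pair, hBdef, trace_sandwich]
    have e22 : Matrix.trace (W*B*Wᴴ*(W*B*Wᴴ)) = Matrix.trace (Ω j * (Aᴴ*A) * Ω j * (Aᴴ*A)) := by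
      rw [trace_conj_pair, hW1, hBdef, trace_sandwich]
      simp [Matrix.mul_one, Matrix.one_mul]
    rw [e11, e12, e21, e22]
    ring
  rw [← Complex.re_sum]
  rw [Finset.sum_congr rfl fun j _ => key j]
  rw [Finset.sum_add_distrib, Finset.sum_add_distrib, Finset.sum_neg_distrib, ← Finset.mul_sum]
  rw [lemL hcard Ω hskew horth (Aᴴ*A) (Aᴴ*A),
    lemL hcard Ω hskew horth (Aᴴ*(Uᴴ*W)*A) (Aᴴ*(Wᴴ*U)*A),
    lemL hcard Ω hskew horth (Aᴴ*(Wᴴ*U)*A) (Aᴴ*(Uᴴ*W)*A)]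
  -- identify the traces
  have htQ : Matrix.trace (Aᴴ*(Wᴴ*U)*A) = Matrix.trace (A * Aᴴ * Wᴴ * U) := by
    rw [Matrix.trace_mul_comm]
    simp [Matrix.mul_assoc]
  have htP : Matrix.trace (Aᴴ*(Uᴴ*W)*A)
      = (starRingEnd ℂ) (Matrix.trace (A * Aᴴ * Wᴴ * U)) := by
    have h1 : (starRingEnd ℂ) (Matrix.trace (A * Aᴴ * Wᴴ * U))
        = Matrix.trace ((A * Aᴴ * Wᴴ * U)ᴴ) := by
      rw [Matrix.trace_conjTranspose]
      rfl
    rw [h1]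
    rw [show (A * Aᴴ * Wᴴ * U)ᴴ = Uᴴ*W*A*Aᴴ by
      simp [Matrix.conjTranspose_mul, Matrix.mul_assoc]]
    rw [Matrix.mul_assoc Aᴴ (Uᴴ*W) A, Matrix.trace_mul_comm]
  rw [htP, htQ]
  have hm : (Matrix.trace (Aᴴ * A)).im = 0 := by
    rw [Matrix.trace]
    simp only [Matrix.diag_apply, Matrix.mul_apply, Matrix.conjTranspose_apply]
    rw [Complex.im_sum]
    refine Finset.sum_eq_zero fun a _ => ?_
    rw [Complex.im_sum]
    refine Finset.sum_eq_zero fun b _ => ?_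
    have h2 : star (A b a) * A b a = ((Complex.normSq (A b a) : ℝ) : ℂ) := by
      rw [mul_comm]
      exact Complex.mul_conj _
    rw [h2, Complex.ofReal_im]
  set x := Matrix.trace (A * Aᴴ * Wᴴ * U) with hx
  set m := Matrix.trace (Aᴴ * A) with hmdef
  have hE : -(2 * -(m * m)) + -((starRingEnd ℂ) x * x) + -(x * (starRingEnd ℂ) x)
      = 2*m^2 - 2*((Complex.normSq x : ℝ) : ℂ) := by
    rw [show (starRingEnd ℂ) x * x = x * (starRingEnd ℂ) x by ring, Complex.mul_conj]
    ring
  rw [hE]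
  rw [Complex.sub_re, Complex.mul_re, Complex.mul_re]
  simp only [Complex.ofReal_re, Complex.ofReal_im, Complex.re_ofNat, Complex.im_ofNat,
    Complex.sq_norm]
  rw [pow_two, Complex.mul_re, hm]
  ring
end

section
/- Define J_P : U(N) → ℝ by J_P(U) = ‖A‖⁴ − |Tr(AA†W†U)|² for fixed A ∈ ℂ^{N×N} and W ∈ U(N). Then the Riemannian gradient of J_P at U is grad J_P(U) = Tr(U†WAA†) · U AA† W† U − Tr(AA†W†U) · W AA†, and if Tr(U†WAA†) ≠ 0 then grad J_P(U) = 0 if and only if AA† Z = Z† AA†, where Z = (Tr(U†WAA†)/|Tr(U†WAA†)|) W†U. -/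
open Matrix
set_option maxHeartbeats 1000000

section Aux14

attribute [local instance] Matrix.linftyOpNormedRing Matrix.linftyOpNormedAlgebra
  Matrix.linftyOpNormedAddCommGroup

private noncomputable def trCLM14 (N : ℕ) : Matrix (Fin N) (Fin N) ℂ →L[ℝ] ℂ :=
  LinearMap.toContinuousLinearMap
    ((Matrix.traceLinearMap (Fin N) ℂ ℂ).restrictScalars ℝ)

private lemma hasDerivAt_trace_mul_exp14 {N : ℕ} (B S : Matrix (Fin N) (Fin N) ℂ) :
    HasDerivAt (fun t : ℝ => Matrix.trace (B * NormedSpace.exp (t • S)))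
      (Matrix.trace (B * S)) 0 := by
  have hexp : HasDerivAt (fun t : ℝ => NormedSpace.exp (t • S)) S 0 := by
    have h := hasDerivAt_exp_smul_const (𝕂 := ℝ) S 0
    simp only [zero_smul, NormedSpace.exp_zero, one_mul] at h
    exact h
  have := (trCLM14 N).hasFDerivAt.comp_hasDerivAt 0 (hexp.const_mul B)
  exact this

end Aux14

/-- The phase-invariant landscape `J_P(U) = ‖A‖⁴ − |Tr(AA†W†U)|²`. -/
noncomputable def JP {N : ℕ} (A W : Matrix (Fin N) (Fin N) ℂ)
    (U : Matrix (Fin N) (Fin N) ℂ) : ℝ :=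
  ((Matrix.trace (Aᴴ * A)).re) ^ 2 - ‖Matrix.trace (A * Aᴴ * Wᴴ * U)‖ ^ 2

theorem stmt14 (N : ℕ) (A W : Matrix (Fin N) (Fin N) ℂ)
    (hW : W ∈ Matrix.unitaryGroup (Fin N) ℂ)
    (U : Matrix (Fin N) (Fin N) ℂ) (hU : U ∈ Matrix.unitaryGroup (Fin N) ℂ)
    -- the claimed Riemannian gradient of J_P at U
    (G : Matrix (Fin N) (Fin N) ℂ)
    (hG : G = Matrix.trace (Uᴴ * W * A * Aᴴ) • (U * A * Aᴴ * Wᴴ * U) -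
      Matrix.trace (A * Aᴴ * Wᴴ * U) • (W * A * Aᴴ)) :
    -- G is the gradient: for every tangent direction US (S skew-Hermitian),
    -- the derivative of J_P along U e^{tS} equals ⟨G, US⟩ = Re Tr(G† U S)
    (∀ S : Matrix (Fin N) (Fin N) ℂ, Sᴴ = -S →
      deriv (fun t : ℝ => JP A W (U * NormedSpace.exp (t • S))) 0 =
        (Matrix.trace (Gᴴ * (U * S))).re) ∧
    -- if Tr(U†WAA†) ≠ 0 then grad J_P(U) = 0 iff AA†Z = Z†AA† for
    -- Z = (Tr(U†WAA†)/|Tr(U†WAA†)|) W†U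
    (Matrix.trace (Uᴴ * W * A * Aᴴ) ≠ 0 →
      (G = 0 ↔
        A * Aᴴ * ((Matrix.trace (Uᴴ * W * A * Aᴴ) /
            ((‖Matrix.trace (Uᴴ * W * A * Aᴴ)‖ : ℝ) : ℂ)) • (Wᴴ * U)) =
          ((Matrix.trace (Uᴴ * W * A * Aᴴ) /
            ((‖Matrix.trace (Uᴴ * W * A * Aᴴ)‖ : ℝ) : ℂ)) • (Wᴴ * U))ᴴ *
            (A * Aᴴ))) := by
  have hUU : Uᴴ * U = 1 := by
    have := hU.1
    rwa [Matrix.star_eq_conjTranspose] at this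
  have hUU' : U * Uᴴ = 1 := by
    have := hU.2
    rwa [Matrix.star_eq_conjTranspose] at this
  set B : Matrix (Fin N) (Fin N) ℂ := A * Aᴴ * Wᴴ * U with hB
  set σ : ℂ := Matrix.trace B with hσ
  have hBH : Bᴴ = Uᴴ * W * A * Aᴴ := by
    simp [hB, Matrix.conjTranspose_mul, mul_assoc]
  have hτσ : Matrix.trace (Uᴴ * W * A * Aᴴ) = star σ := by
    rw [← hBH, Matrix.trace_conjTranspose, hσ]
  clear_value B σ
  constructor
  · intro S hS
    have hf : HasDerivAt (fun t : ℝ => Matrix.trace (B * NormedSpace.exp (t • S)))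
        (Matrix.trace (B * S)) 0 := hasDerivAt_trace_mul_exp14 B S
    set d : ℂ := Matrix.trace (B * S) with hd
    clear_value d
    have hg0 : Matrix.trace (B * NormedSpace.exp ((0:ℝ) • S)) = σ := by
      simp [hσ]
    have hre : HasDerivAt (fun t : ℝ =>
        (Matrix.trace (B * NormedSpace.exp (t • S))).re) d.re 0 :=
      Complex.reCLM.hasFDerivAt.comp_hasDerivAt 0 hf
    have him : HasDerivAt (fun t : ℝ =>
        (Matrix.trace (B * NormedSpace.exp (t • S))).im) d.im 0 :=
      Complex.imCLM.hasFDerivAt.comp_hasDerivAt 0 hf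
    have hsq : HasDerivAt (fun t : ℝ =>
        ((Matrix.trace (Aᴴ * A)).re) ^ 2 -
          ((Matrix.trace (B * NormedSpace.exp (t • S))).re ^ 2 +
           (Matrix.trace (B * NormedSpace.exp (t • S))).im ^ 2))
        (0 - (2 * σ.re * d.re + 2 * σ.im * d.im)) 0 := by
      have h1 := hre.pow 2
      have h2 := him.pow 2
      rw [hg0] at h1 h2
      have h3 := (hasDerivAt_const (0:ℝ) (((Matrix.trace (Aᴴ * A)).re) ^ 2)).sub (h1.add h2)
      refine h3.congr_deriv ?_
      push_cast
      ring
    have hJP : (fun t : ℝ => JP A W (U * NormedSpace.exp (t • S))) =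
        (fun t : ℝ => ((Matrix.trace (Aᴴ * A)).re) ^ 2 -
          ((Matrix.trace (B * NormedSpace.exp (t • S))).re ^ 2 +
           (Matrix.trace (B * NormedSpace.exp (t • S))).im ^ 2)) := by
      funext t
      have h4 : A * Aᴴ * Wᴴ * (U * NormedSpace.exp (t • S)) =
          B * NormedSpace.exp (t • S) := by rw [hB]; simp [mul_assoc]
      rw [JP, h4, Complex.sq_norm, Complex.normSq_apply]
      ring
    rw [hJP, hsq.deriv]
    -- the algebraic identity on the RHS
    have hCS : Matrix.trace (Bᴴ * S) = -star d := by
      have h : star d = -Matrix.trace (Bᴴ * S) := by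
        rw [hd, ← Matrix.trace_conjTranspose, Matrix.conjTranspose_mul, hS,
          Matrix.neg_mul, Matrix.trace_neg, Matrix.trace_mul_comm]
      rw [h, neg_neg]
    have hGm : Gᴴ * (U * S) = σ • (Bᴴ * S) - star σ • (B * S) := by
      rw [hG, hτσ]
      simp only [Matrix.conjTranspose_sub, Matrix.conjTranspose_smul,
        Matrix.conjTranspose_mul, Matrix.conjTranspose_conjTranspose, star_star,
        Matrix.sub_mul, Matrix.smul_mul, hBH]
      have hUUS : ∀ X : Matrix (Fin N) (Fin N) ℂ, Uᴴ * (U * X) = X := fun X => by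
        rw [← mul_assoc, hUU, one_mul]
      congr 1
      · congr 1
        simp [mul_assoc, hUUS]
      · congr 1
        simp [hB, mul_assoc]
    have hGtr : Matrix.trace (Gᴴ * (U * S)) = σ * (-star d) - star σ * d := by
      rw [hGm, Matrix.trace_sub, Matrix.trace_smul, Matrix.trace_smul, hCS, hd]
      simp [smul_eq_mul]
    rw [hGtr]
    simp [Complex.sub_re, Complex.mul_re, Complex.neg_re, Complex.neg_im,
      Complex.conj_re, Complex.conj_im]
    ring
  · intro hτ
    rw [hG, hτσ]
    have hσ0 : σ ≠ 0 := by
      intro h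
      exact hτ (by rw [hτσ, h, star_zero])
    set r : ℂ := ((‖star σ‖ : ℝ) : ℂ) with hr
    have hr0 : r ≠ 0 := by
      simp only [hr, ne_eq, Complex.ofReal_eq_zero, norm_eq_zero, star_eq_zero]
      exact hσ0
    have key : ∀ X Y : Matrix (Fin N) (Fin N) ℂ, U * X = U * Y ↔ X = Y := by
      intro X Y
      constructor
      · intro h
        have h2 := congrArg (fun M => Uᴴ * M) h
        simpa [← mul_assoc, hUU] using h2
      · intro h; rw [h]
    have step1 : ((star σ) • (U * A * Aᴴ * Wᴴ * U) - σ • (W * A * Aᴴ) = 0) ↔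
        (star σ • B = σ • Bᴴ) := by
      rw [sub_eq_zero]
      have e1 : U * A * Aᴴ * Wᴴ * U = U * B := by rw [hB]; simp [mul_assoc]
      have e2 : W * A * Aᴴ = U * Bᴴ := by rw [hBH]; simp [← mul_assoc, hUU']
      rw [e1, e2]
      constructor
      · intro h
        have h2 := congrArg (fun M => Uᴴ * M) h
        simpa [Matrix.mul_smul, ← mul_assoc, hUU] using h2
      · intro h
        rw [← Matrix.mul_smul, ← Matrix.mul_smul, h]
    have hconj : ((star σ / r) • (Wᴴ * U))ᴴ = (σ / r) • (Uᴴ * W) := by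
      rw [Matrix.conjTranspose_smul, Matrix.conjTranspose_mul,
        Matrix.conjTranspose_conjTranspose, star_div₀, star_star]
      congr 1
      rw [hr]
      simp [Complex.star_def, Complex.conj_ofReal]
    have step2 : (A * Aᴴ * ((star σ / r) • (Wᴴ * U)) =
        ((star σ / r) • (Wᴴ * U))ᴴ * (A * Aᴴ)) ↔ (star σ • B = σ • Bᴴ) := by
      rw [hconj, Matrix.mul_smul, Matrix.smul_mul]
      have e3 : A * Aᴴ * (Wᴴ * U) = B := by rw [hB]; simp [mul_assoc]
      have e4 : Uᴴ * W * (A * Aᴴ) = Bᴴ := by rw [hBH]; simp [mul_assoc]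
      rw [e3, e4, div_eq_inv_mul, div_eq_inv_mul, mul_smul, mul_smul]
      constructor
      · intro h
        exact smul_right_injective _ (inv_ne_zero hr0) h
      · intro h; rw [h]
    exact step1.trans step2.symm
end

section
/- Let V_T : L²(ℝ₊;ℝ) → U(N) be the final-time propagator map of the Schrödinger equation iħ dU/dt = (H₀ − μℰ(t))U, U(0) = I, with adjoint differential (d_ℰV_T)*(A)(t) = −Im Tr(A† V_T(ℰ) V_t(ℰ)† μ V_t(ℰ)). Then for every ℰ and every A ∈ T_{V_T(ℰ)}U(N), ‖(d_ℰV_T)*(A)‖_{L²} ≤ √T ‖μ‖ ‖A‖, and consequently for any smooth g : U(N) → ℝ, the gradient of g ∘ V_T is uniformly bounded over L²(ℝ₊;ℝ) by √T ‖μ‖ · max_{U∈U(N)} ‖grad g(U)‖. -/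
open Matrix MeasureTheory intervalIntegral

attribute [local instance] Matrix.frobeniusNormedAddCommGroup Matrix.frobeniusNormedSpace

/-- The Frobenius (Hilbert–Schmidt) norm of a complex matrix. -/
noncomputable def frobNorm {N : ℕ} (M : Matrix (Fin N) (Fin N) ℂ) : ℝ :=
  Real.sqrt ((Matrix.trace (Mᴴ * M)).re)

lemma frobNorm_nonneg {N : ℕ} (M : Matrix (Fin N) (Fin N) ℂ) : 0 ≤ frobNorm M :=
  Real.sqrt_nonneg _

lemma trace_conj_eq {N : ℕ} (A M : Matrix (Fin N) (Fin N) ℂ) :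
    Matrix.trace (Aᴴ * M) = ∑ p : Fin N × Fin N, (starRingEnd ℂ) (A p.1 p.2) * M p.1 p.2 := by
  rw [Fintype.sum_prod_type]
  rw [show Matrix.trace (Aᴴ * M) = ∑ j, ∑ i, (starRingEnd ℂ) (A i j) * M i j by
    simp only [Matrix.trace, Matrix.mul_apply, Matrix.diag, Matrix.conjTranspose_apply]
    rfl]
  exact Finset.sum_comm

lemma trace_re_eq {N : ℕ} (M : Matrix (Fin N) (Fin N) ℂ) :
    (Matrix.trace (Mᴴ * M)).re = ∑ p : Fin N × Fin N, ‖M p.1 p.2‖ ^ 2 := by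
  rw [trace_conj_eq, Complex.re_sum]
  refine Finset.sum_congr rfl fun p _ => ?_
  rw [mul_comm, Complex.mul_conj, Complex.ofReal_re, Complex.sq_norm]

lemma abs_trace_le {N : ℕ} (A M : Matrix (Fin N) (Fin N) ℂ) :
    ‖Matrix.trace (Aᴴ * M)‖ ≤ frobNorm A * frobNorm M := by
  have h1 : ‖Matrix.trace (Aᴴ * M)‖ ≤
      ∑ p : Fin N × Fin N, ‖A p.1 p.2‖ * ‖M p.1 p.2‖ := by
    rw [trace_conj_eq]
    refine (norm_sum_le _ _).trans_eq ?_
    simp [_root_.map_mul]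
  refine h1.trans ?_
  have h2 := Finset.sum_mul_sq_le_sq_mul_sq Finset.univ
    (fun p : Fin N × Fin N => ‖A p.1 p.2‖) (fun p => ‖M p.1 p.2‖)
  have h3 : ∑ p : Fin N × Fin N, ‖A p.1 p.2‖ * ‖M p.1 p.2‖ =
      Real.sqrt ((∑ p : Fin N × Fin N, ‖A p.1 p.2‖ * ‖M p.1 p.2‖) ^ 2) := by
    rw [Real.sqrt_sq (Finset.sum_nonneg fun p _ => mul_nonneg (norm_nonneg _) (norm_nonneg _))]
  rw [h3, frobNorm, frobNorm, trace_re_eq, trace_re_eq, ← Real.sqrt_mul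
    (Finset.sum_nonneg fun p _ => sq_nonneg _)]
  exact Real.sqrt_le_sqrt h2

lemma frobNorm_unitary_conj {N : ℕ} {U W M : Matrix (Fin N) (Fin N) ℂ}
    (hU : Uᴴ * U = 1) (hW : W * Wᴴ = 1) :
    frobNorm (U * M * W) = frobNorm M := by
  unfold frobNorm
  have h : (U * M * W)ᴴ * (U * M * W) = Wᴴ * (Mᴴ * M) * W := by
    calc (U * M * W)ᴴ * (U * M * W)
        = Wᴴ * (Mᴴ * ((Uᴴ * U) * (M * W))) := by
          simp only [conjTranspose_mul, Matrix.mul_assoc]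
      _ = Wᴴ * (Mᴴ * M) * W := by rw [hU, Matrix.one_mul]; simp only [Matrix.mul_assoc]
  rw [h, Matrix.trace_mul_cycle, ← Matrix.mul_assoc, hW, Matrix.one_mul]

theorem stmt19 (N : ℕ) (T hbar : ℝ) (hT : 0 < T) (hhbarpos : 0 < hbar)
    (H₀ μ : Matrix (Fin N) (Fin N) ℂ) (hH₀ : H₀.IsHermitian) (hμ : μ.IsHermitian)
    -- the control field ℰ and the corresponding propagator t ↦ V_t(ℰ),
    -- solving ihbar dV/dt = (H₀ − ℰ(t)μ)V, V(0) = I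
    (ℰ : ℝ → ℝ) (V : ℝ → Matrix (Fin N) (Fin N) ℂ)
    (hV0 : V 0 = 1)
    (hVunitary : ∀ t, V t ∈ Matrix.unitaryGroup (Fin N) ℂ)
    (hschro : ∀ t : ℝ, HasDerivAt V
      (((-Complex.I / (hbar : ℂ))) • ((H₀ - ℰ t • μ) * V t)) t) :
    -- ‖(d_ℰV_T)*(A)‖_{L²} ≤ √T ‖μ‖ ‖A‖, where
    -- (d_ℰV_T)*(A)(t) = −Im Tr(A† V_T V_t† μ V_t)
    (∀ A : Matrix (Fin N) (Fin N) ℂ,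
      Real.sqrt (∫ t in (0:ℝ)..T,
          (-(Matrix.trace (Aᴴ * V T * (V t)ᴴ * μ * V t)).im) ^ 2) ≤
        Real.sqrt T * frobNorm μ * frobNorm A) ∧
    -- consequently, for any smooth kinematic gradient field grad g, the
    -- dynamical gradient (d_ℰV_T)*(grad g(V_T(ℰ))) is bounded uniformly by
    -- √T ‖μ‖ · max_{U ∈ U(N)} ‖grad g(U)‖
    (∀ gradG : Matrix (Fin N) (Fin N) ℂ → Matrix (Fin N) (Fin N) ℂ,
      Continuous gradG →
      Real.sqrt (∫ t in (0:ℝ)..T,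
          (-(Matrix.trace ((gradG (V T))ᴴ * V T * (V t)ᴴ * μ * V t)).im) ^ 2) ≤
        Real.sqrt T * frobNorm μ *
          ⨆ X : Matrix.unitaryGroup (Fin N) ℂ, frobNorm (gradG X)) := by
  have hVcont : Continuous V := by
    rw [continuous_iff_continuousAt]; exact fun t => (hschro t).continuousAt
  have hmul : ∀ t, V t * (V t)ᴴ = 1 := fun t => by
    have := Matrix.mem_unitaryGroup_iff.mp (hVunitary t)
    rwa [Matrix.star_eq_conjTranspose] at this
  have hmul' : ∀ t, (V t)ᴴ * V t = 1 := fun t => by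
    have := Matrix.mem_unitaryGroup_iff'.mp (hVunitary t)
    rwa [Matrix.star_eq_conjTranspose] at this
  have key : ∀ A : Matrix (Fin N) (Fin N) ℂ,
      Real.sqrt (∫ t in (0:ℝ)..T,
          (-(Matrix.trace (Aᴴ * V T * (V t)ᴴ * μ * V t)).im) ^ 2) ≤
        Real.sqrt T * frobNorm μ * frobNorm A := by
    intro A
    set C := frobNorm A * frobNorm μ with hC
    have hCnn : 0 ≤ C := mul_nonneg (frobNorm_nonneg _) (frobNorm_nonneg _)
    have hpt : ∀ t : ℝ,
        (-(Matrix.trace (Aᴴ * V T * (V t)ᴴ * μ * V t)).im) ^ 2 ≤ C ^ 2 := by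
      intro t
      have h1 : Aᴴ * V T * (V t)ᴴ * μ * V t = Aᴴ * (V T * (V t)ᴴ * μ * V t) := by
        simp only [Matrix.mul_assoc]
      have hUU : (V T * (V t)ᴴ)ᴴ * (V T * (V t)ᴴ) = 1 := by
        calc (V T * (V t)ᴴ)ᴴ * (V T * (V t)ᴴ)
            = V t * (((V T)ᴴ * V T) * (V t)ᴴ) := by
              simp only [conjTranspose_mul, conjTranspose_conjTranspose, Matrix.mul_assoc]
          _ = 1 := by rw [hmul' T, Matrix.one_mul, hmul t]
      have h2 : frobNorm (V T * (V t)ᴴ * μ * V t) = frobNorm μ :=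
        frobNorm_unitary_conj hUU (hmul t)
      have habs : ‖Matrix.trace (Aᴴ * (V T * (V t)ᴴ * μ * V t))‖ ≤ C := by
        have := abs_trace_le A (V T * (V t)ᴴ * μ * V t)
        rwa [h2] at this
      have him : |(Matrix.trace (Aᴴ * V T * (V t)ᴴ * μ * V t)).im| ≤ C := by
        rw [h1]; exact (Complex.abs_im_le_norm _).trans habs
      calc (-(Matrix.trace (Aᴴ * V T * (V t)ᴴ * μ * V t)).im) ^ 2
          = |(Matrix.trace (Aᴴ * V T * (V t)ᴴ * μ * V t)).im| ^ 2 := by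
            rw [neg_sq, sq_abs]
        _ ≤ C ^ 2 := pow_le_pow_left₀ (abs_nonneg _) him 2
    have hcont : Continuous fun t : ℝ =>
        (-(Matrix.trace (Aᴴ * V T * (V t)ᴴ * μ * V t)).im) ^ 2 := by
      have hc : Continuous fun t : ℝ => Aᴴ * V T * (V t)ᴴ * μ * V t :=
        ((continuous_const.matrix_mul hVcont.matrix_conjTranspose).matrix_mul
          continuous_const).matrix_mul hVcont
      exact ((Complex.continuous_im.comp hc.matrix_trace).neg).pow 2
    have hI : (∫ t in (0:ℝ)..T,
        (-(Matrix.trace (Aᴴ * V T * (V t)ᴴ * μ * V t)).im) ^ 2) ≤ T * C ^ 2 := by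
      have := intervalIntegral.integral_mono_on (μ := MeasureTheory.volume) hT.le
        (hcont.intervalIntegrable 0 T) (_root_.intervalIntegrable_const (c := C ^ 2))
        (fun t _ => hpt t)
      simpa using this
    refine (Real.sqrt_le_sqrt hI).trans_eq ?_
    rw [Real.sqrt_mul hT.le, Real.sqrt_sq hCnn, hC]
    ring
  refine ⟨key, fun gradG hg => ?_⟩
  have hfc : Continuous fun M : Matrix (Fin N) (Fin N) ℂ => frobNorm (gradG M) := by
    unfold frobNorm
    exact Real.continuous_sqrt.comp (Complex.continuous_re.comp
      ((hg.matrix_conjTranspose.matrix_mul hg).matrix_trace))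
  have hclosed : IsClosed (↑(Matrix.unitaryGroup (Fin N) ℂ) : Set (Matrix (Fin N) (Fin N) ℂ)) := by
    have hpc : Continuous fun A : Matrix (Fin N) (Fin N) ℂ => (Aᴴ * A, A * Aᴴ) :=
      (continuous_id.matrix_conjTranspose.matrix_mul continuous_id).prodMk
        (continuous_id.matrix_mul continuous_id.matrix_conjTranspose)
    have hset : (↑(Matrix.unitaryGroup (Fin N) ℂ) : Set (Matrix (Fin N) (Fin N) ℂ)) =
        (fun A : Matrix (Fin N) (Fin N) ℂ => (Aᴴ * A, A * Aᴴ)) ⁻¹'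
          {((1 : Matrix (Fin N) (Fin N) ℂ), (1 : Matrix (Fin N) (Fin N) ℂ))} := by
      ext A
      simp only [Set.mem_preimage, Set.mem_singleton_iff, Prod.mk.injEq, SetLike.mem_coe]
      rw [← Matrix.star_eq_conjTranspose]
      exact Unitary.mem_iff
    rw [hset]
    exact isClosed_singleton.preimage hpc
  have hbound : Bornology.IsBounded (↑(Matrix.unitaryGroup (Fin N) ℂ) : Set (Matrix (Fin N) (Fin N) ℂ)) := by
    rw [_root_.isBounded_iff_forall_norm_le]
    refine ⟨N, fun U hU => ?_⟩
    rw [Matrix.frobenius_norm_def]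
    have hsum : ∑ i, ∑ j, ‖U i j‖ ^ (2 : ℝ) ≤ (N : ℝ) * N := by
      calc ∑ i, ∑ j, ‖U i j‖ ^ (2 : ℝ) ≤ ∑ _i : Fin N, ∑ _j : Fin N, (1 : ℝ) := by
            refine Finset.sum_le_sum fun i _ => Finset.sum_le_sum fun j _ => ?_
            exact Real.rpow_le_one (norm_nonneg _)
              (entry_norm_bound_of_unitary hU i j) (by norm_num)
        _ = (N : ℝ) * N := by simp [mul_comm]
    calc (∑ i, ∑ j, ‖U i j‖ ^ (2 : ℝ)) ^ (1 / 2 : ℝ)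
        ≤ ((N : ℝ) * N) ^ (1 / 2 : ℝ) := by
          refine Real.rpow_le_rpow ?_ hsum (by norm_num)
          exact Finset.sum_nonneg fun i _ => Finset.sum_nonneg fun j _ =>
            Real.rpow_nonneg (norm_nonneg _) _
      _ = (N : ℝ) := by
          rw [show ((N : ℝ) * N) = (N : ℝ) ^ (2 : ℝ) by
            rw [show (2 : ℝ) = ((2 : ℕ) : ℝ) by norm_num, Real.rpow_natCast]; ring]
          rw [← Real.rpow_mul (Nat.cast_nonneg N)]
          norm_num
  have hcomp : IsCompact (↑(Matrix.unitaryGroup (Fin N) ℂ) : Set (Matrix (Fin N) (Fin N) ℂ)) :=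
    Metric.isCompact_of_isClosed_isBounded hclosed hbound
  have hb : BddAbove (Set.range fun X : Matrix.unitaryGroup (Fin N) ℂ =>
      frobNorm (gradG X)) := by
    refine BddAbove.mono ?_ (hcomp.bddAbove_image hfc.continuousOn)
    rintro y ⟨X, rfl⟩
    exact ⟨X, X.2, rfl⟩
  refine (key (gradG (V T))).trans ?_
  exact mul_le_mul_of_nonneg_left (le_ciSup hb ⟨V T, hVunitary T⟩)
    (mul_nonneg (Real.sqrt_nonneg _) (frobNorm_nonneg _))
end
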